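/- arXiv:1409.6109 — 3 statements merged into one kernel-verified Lean document; each statement's English description precedes it below -/
import Mathlib

section
/- Let w ∈ ℝ^d and define f : ℝ^d → ℝ by f(x) = exp(wᵀx). Then for every multi-index 𝐤 ∈ ℕ₀^d the Hermite coefficient of f is f̂(𝐤) = e^{wᵀw/2} w^𝐤 / √(𝐤!), and for every 𝛚 ∈ (0,1)^d and 𝛄 ∈ (0,∞)^d the function f belongs to the Hermite space 𝓗_{𝛆_{𝛚,𝛄}} (its weighted norm ‖f‖_{𝛆_{𝛚,𝛄}} is finite). -/
open MeasureTheory Real Filter Asymptotics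

noncomputable section

/-- Standard Gaussian density on `ℝ^d`. -/
def gaussD (d : ℕ) (x : Fin d → ℝ) : ℝ :=
  (2 * π) ^ (-(d : ℝ) / 2) * Real.exp (-(∑ i, (x i) ^ 2) / 2)

/-- Normalized (probabilists') Hermite polynomial `H_k`. -/
def Hnorm (k : ℕ) (x : ℝ) : ℝ :=
  (Polynomial.aeval x (Polynomial.hermite k)) / Real.sqrt (Nat.factorial k)

/-- Multivariate Hermite polynomial indexed by a multi-index. -/
def Hmulti {d : ℕ} (k : Fin d → ℕ) (x : Fin d → ℝ) : ℝ :=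
  ∏ j, Hnorm (k j) (x j)

/-- Gaussian square-integrability. -/
def GaussianSqInt {d : ℕ} (f : (Fin d → ℝ) → ℝ) : Prop :=
  MeasureTheory.Integrable (fun x => (f x) ^ 2 * gaussD d x)

/-- `k`-th Hermite coefficient of `f`. -/
def hCoeff {d : ℕ} (f : (Fin d → ℝ) → ℝ) (k : Fin d → ℕ) : ℝ :=
  ∫ x, f x * Hmulti k x * gaussD d x

/-- Membership in the Hermite space `𝓗_r`. -/
def memHermite {d : ℕ} (r : (Fin d → ℕ) → ℝ) (f : (Fin d → ℝ) → ℝ) : Prop :=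
  Continuous f ∧ GaussianSqInt f ∧
    Summable (fun k : Fin d → ℕ => (r k)⁻¹ * (hCoeff f k) ^ 2)

/-- Squared Hermite-space norm `‖f‖_r²`. -/
def hNormSq {d : ℕ} (r : (Fin d → ℕ) → ℝ) (f : (Fin d → ℝ) → ℝ) : ℝ :=
  ∑' k : Fin d → ℕ, (r k)⁻¹ * (hCoeff f k) ^ 2

/-- Gaussian integral `I(f)`. -/
def qmcInt {d : ℕ} (f : (Fin d → ℝ) → ℝ) : ℝ := ∫ x, f x * gaussD d x

/-- QMC rule `Q_{n,d}(f,P)`. -/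
def qmcRule {d n : ℕ} (f : (Fin d → ℝ) → ℝ) (P : Fin n → Fin d → ℝ) : ℝ :=
  (1 / (n : ℝ)) * ∑ i, f (P i)

/-- Worst-case error of QMC integration in `𝓗_r` with point set `P`. -/
def wce (d n : ℕ) (r : (Fin d → ℕ) → ℝ) (P : Fin n → Fin d → ℝ) : ℝ :=
  sSup {e : ℝ | ∃ f : (Fin d → ℝ) → ℝ,
    memHermite r f ∧ hNormSq r f ≤ 1 ∧ e = |qmcInt f - qmcRule f P|}

/-- Information complexity of QMC integration in `𝓗_r`. -/
def nmin (d : ℕ) (r : (Fin d → ℕ) → ℝ) (ε : ℝ) : ℕ :=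
  sInf {n : ℕ | 0 < n ∧ ∃ P : Fin n → Fin d → ℝ, wce d n r P ≤ ε}

/-- The weight `p_{α,γ}` with polynomial decay. -/
def pweight (α γ : ℝ) (k : ℕ) : ℝ := if k = 0 then 1 else γ * (k : ℝ) ^ (-α)

/-- Product weight `𝐩_{𝛂,𝛄}`. -/
def pweights {d : ℕ} (α γ : Fin d → ℝ) (k : Fin d → ℕ) : ℝ :=
  ∏ j, pweight (α j) (γ j) (k j)

/-- The weight `ε_{ω,γ}` with exponential decay. -/
def eweight (ω γ : ℝ) (k : ℕ) : ℝ := if k = 0 then 1 else γ * ω ^ k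

/-- Product weight `𝛆_{𝛚,𝛄}`. -/
def eweights {d : ℕ} (ω γ : Fin d → ℝ) (k : Fin d → ℕ) : ℝ :=
  ∏ j, eweight (ω j) (γ j) (k j)




section AuxStmt8
open Polynomial

set_option maxHeartbeats 1000000

lemma exp_mul_gauss (w x : ℝ) :
    Real.exp (w * x) * Real.exp (-(x ^ 2) / 2) = Real.exp (w * x - x ^ 2 / 2) := by
  rw [← Real.exp_add]; congr 1; ring

lemma integrable_pow_gauss (n : ℕ) (w : ℝ) :
    Integrable (fun x : ℝ => x ^ n * Real.exp (w * x - x ^ 2 / 2)) := by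
  have hmaj : Integrable (fun x : ℝ =>
      Real.exp (2 * (n : ℝ) ^ 2 + 2 * w ^ 2) * Real.exp (-(1/4 : ℝ) * x ^ 2)) :=
    (integrable_exp_neg_mul_sq (by norm_num)).const_mul _
  refine hmaj.mono' ?_ ?_
  · exact ((continuous_pow n).mul (by continuity)).aestronglyMeasurable
  · filter_upwards with x
    rw [Real.norm_eq_abs, abs_mul, abs_pow, abs_of_nonneg (Real.exp_pos _).le, ← Real.exp_add]
    have h1 : |x| ^ n ≤ Real.exp ((n : ℝ) * |x|) := by
      calc |x| ^ n ≤ Real.exp |x| ^ n := by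
            gcongr
            · exact (Real.add_one_le_exp |x|).trans' (by linarith [abs_nonneg x])
        _ = Real.exp ((n : ℝ) * |x|) := by rw [← Real.exp_nat_mul]
    calc |x| ^ n * Real.exp (w * x - x ^ 2 / 2)
        ≤ Real.exp ((n : ℝ) * |x|) * Real.exp (w * x - x ^ 2 / 2) := by
          gcongr
      _ = Real.exp ((n : ℝ) * |x| + (w * x - x ^ 2 / 2)) := by rw [← Real.exp_add]
      _ ≤ Real.exp (2 * (n : ℝ) ^ 2 + 2 * w ^ 2 + -(1/4 : ℝ) * x ^ 2) := by
          apply Real.exp_le_exp.mpr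
          have hwx : w * x ≤ |w| * |x| := by
            calc w * x ≤ |w * x| := le_abs_self _
              _ = |w| * |x| := abs_mul w x
          have h2 : (0:ℝ) ≤ (|x| - 4 * (n:ℝ)) ^ 2 := sq_nonneg _
          have h3 : (0:ℝ) ≤ (|x| - 4 * |w|) ^ 2 := sq_nonneg _
          have h4 : |x| ^ 2 = x ^ 2 := sq_abs x
          have h5 : |w| ^ 2 = w ^ 2 := sq_abs w
          nlinarith [abs_nonneg x, abs_nonneg w]

lemma integrable_poly_gauss (p : ℝ[X]) (w : ℝ) :
    Integrable (fun x : ℝ => p.eval x * Real.exp (w * x - x ^ 2 / 2)) := by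
  have h : (fun x : ℝ => p.eval x * Real.exp (w * x - x ^ 2 / 2))
      = fun x => ∑ i ∈ Finset.range (p.natDegree + 1),
          p.coeff i * (x ^ i * Real.exp (w * x - x ^ 2 / 2)) := by
    funext x
    rw [Polynomial.eval_eq_sum_range, Finset.sum_mul]
    simp [mul_assoc]
  rw [h]
  exact integrable_finset_sum _ (fun i _ => (integrable_pow_gauss i w).const_mul _)

lemma integral_exp_gauss (w : ℝ) :
    ∫ x : ℝ, Real.exp (w * x - x ^ 2 / 2) = Real.sqrt (2 * π) * Real.exp (w ^ 2 / 2) := by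
  have h : ∀ x : ℝ, Real.exp (w * x - x ^ 2 / 2)
      = Real.exp (-(1/2 : ℝ) * (x - w) ^ 2) * Real.exp (w ^ 2 / 2) := by
    intro x; rw [← Real.exp_add]; congr 1; ring
  simp_rw [h]
  rw [integral_mul_const,
    integral_sub_right_eq_self (fun x : ℝ => Real.exp (-(1/2 : ℝ) * x ^ 2)) w,
    integral_gaussian, show π / (1/2 : ℝ) = 2 * π by ring]

lemma integral_hermite_gauss (w : ℝ) (k : ℕ) :
    ∫ x : ℝ, ((hermite k).map (algebraMap ℤ ℝ)).eval x * Real.exp (w * x - x ^ 2 / 2)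
      = Real.sqrt (2 * π) * Real.exp (w ^ 2 / 2) * w ^ k := by
  induction k with
  | zero => simpa using integral_exp_gauss w
  | succ k ih =>
    set p : ℝ[X] := (hermite k).map (algebraMap ℤ ℝ) with hp
    have hmapsucc : (hermite (k+1)).map (algebraMap ℤ ℝ) = X * p - derivative p := by
      rw [hermite_succ, Polynomial.map_sub, Polynomial.map_mul, Polynomial.map_X, hp,
        Polynomial.derivative_map]
    have hu : ∀ x : ℝ, HasDerivAt (fun x : ℝ => p.eval x * Real.exp (w * x))
        ((derivative p).eval x * Real.exp (w * x)
          + p.eval x * (Real.exp (w * x) * (w * 1))) x := by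
      intro x
      exact (p.hasDerivAt x).mul (((hasDerivAt_id x).const_mul w).exp)
    have hv : ∀ x : ℝ, HasDerivAt (fun x : ℝ => Real.exp (-(x ^ 2) / 2))
        (Real.exp (-(x ^ 2) / 2) * (-(↑2 * x ^ 1) / 2)) x := by
      intro x
      exact (((hasDerivAt_pow 2 x).neg).div_const 2).exp
    have e1 : ∀ x : ℝ, (p.eval x * Real.exp (w * x)) * (Real.exp (-(x ^ 2) / 2) * (-(↑2 * x ^ 1) / 2))
        = -((X * p : ℝ[X]).eval x * Real.exp (w * x - x ^ 2 / 2)) := by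
      intro x
      simp only [Polynomial.eval_mul, Polynomial.eval_X]
      rw [← exp_mul_gauss]; ring
    have e2 : ∀ x : ℝ, ((derivative p).eval x * Real.exp (w * x)
          + p.eval x * (Real.exp (w * x) * (w * 1))) * Real.exp (-(x ^ 2) / 2)
        = (derivative p).eval x * Real.exp (w * x - x ^ 2 / 2)
          + w * (p.eval x * Real.exp (w * x - x ^ 2 / 2)) := by
      intro x
      rw [← exp_mul_gauss]; ring
    have e3 : ∀ x : ℝ, (p.eval x * Real.exp (w * x)) * Real.exp (-(x ^ 2) / 2)
        = p.eval x * Real.exp (w * x - x ^ 2 / 2) := by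
      intro x; rw [← exp_mul_gauss]; ring
    have hi1 : Integrable (fun x : ℝ => (p.eval x * Real.exp (w * x))
        * (Real.exp (-(x ^ 2) / 2) * (-(↑2 * x ^ 1) / 2))) := by
      refine ((integrable_poly_gauss (X * p) w).neg).congr ?_
      filter_upwards with x using (e1 x).symm
    have hi2 : Integrable (fun x : ℝ => ((derivative p).eval x * Real.exp (w * x)
          + p.eval x * (Real.exp (w * x) * (w * 1))) * Real.exp (-(x ^ 2) / 2)) := by
      refine ((integrable_poly_gauss (derivative p) w).add
        ((integrable_poly_gauss p w).const_mul w)).congr ?_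
      filter_upwards with x using (e2 x).symm
    have hi3 : Integrable (fun x : ℝ => (p.eval x * Real.exp (w * x)) * Real.exp (-(x ^ 2) / 2)) := by
      refine (integrable_poly_gauss p w).congr ?_
      filter_upwards with x using (e3 x).symm
    have hibp := integral_mul_deriv_eq_deriv_mul_of_integrable (fun x _ => hu x) (fun x _ => hv x) hi1 hi2 hi3
    have hA : ∫ x : ℝ, (p.eval x * Real.exp (w * x)) * (Real.exp (-(x ^ 2) / 2) * (-(↑2 * x ^ 1) / 2))
        = -∫ x : ℝ, (X * p : ℝ[X]).eval x * Real.exp (w * x - x ^ 2 / 2) := by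
      rw [← integral_neg]; exact integral_congr_ae (by filter_upwards with x using e1 x)
    have hB : ∫ x : ℝ, ((derivative p).eval x * Real.exp (w * x)
          + p.eval x * (Real.exp (w * x) * (w * 1))) * Real.exp (-(x ^ 2) / 2)
        = (∫ x : ℝ, (derivative p).eval x * Real.exp (w * x - x ^ 2 / 2))
          + w * ∫ x : ℝ, p.eval x * Real.exp (w * x - x ^ 2 / 2) := by
      rw [show (fun x : ℝ => ((derivative p).eval x * Real.exp (w * x)
          + p.eval x * (Real.exp (w * x) * (w * 1))) * Real.exp (-(x ^ 2) / 2))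
        = fun x : ℝ => (derivative p).eval x * Real.exp (w * x - x ^ 2 / 2)
          + w * (p.eval x * Real.exp (w * x - x ^ 2 / 2)) from funext e2]
      rw [integral_add (integrable_poly_gauss (derivative p) w)
        ((integrable_poly_gauss p w).const_mul w), integral_const_mul]
    have hparts : ∫ x : ℝ, (X * p : ℝ[X]).eval x * Real.exp (w * x - x ^ 2 / 2)
        = (∫ x : ℝ, (derivative p).eval x * Real.exp (w * x - x ^ 2 / 2))
          + w * ∫ x : ℝ, p.eval x * Real.exp (w * x - x ^ 2 / 2) := by
      rw [hA, hB] at hibp; linarith [hibp]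
    have hsplit : (fun x : ℝ => ((hermite (k+1)).map (algebraMap ℤ ℝ)).eval x * Real.exp (w * x - x ^ 2 / 2))
        = fun x : ℝ => (X * p : ℝ[X]).eval x * Real.exp (w * x - x ^ 2 / 2)
          - (derivative p).eval x * Real.exp (w * x - x ^ 2 / 2) := by
      funext x
      rw [hmapsucc, Polynomial.eval_sub, sub_mul]
    rw [hsplit, integral_sub (integrable_poly_gauss (X * p) w)
        (integrable_poly_gauss (derivative p) w), hparts, ih]
    ring

lemma aeval_hermite_eq (k : ℕ) (x : ℝ) :
    (Polynomial.aeval x (Polynomial.hermite k) : ℝ)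
      = ((hermite k).map (algebraMap ℤ ℝ)).eval x := by
  rw [Polynomial.aeval_def, Polynomial.eval_map]

lemma factor1D (w : ℝ) (k : ℕ) :
    ∫ t : ℝ, Real.exp (w * t) * Hnorm k t * ((2 * π) ^ (-(1:ℝ) / 2) * Real.exp (-(t ^ 2) / 2))
      = Real.exp (w ^ 2 / 2) * w ^ k / Real.sqrt (Nat.factorial k) := by
  have hfac : (0:ℝ) < Real.sqrt (Nat.factorial k) := by
    apply Real.sqrt_pos.mpr; exact_mod_cast k.factorial_pos
  have h : (fun t : ℝ => Real.exp (w * t) * Hnorm k t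
        * ((2 * π) ^ (-(1:ℝ) / 2) * Real.exp (-(t ^ 2) / 2)))
      = fun t => ((2 * π) ^ (-(1:ℝ) / 2) / Real.sqrt (Nat.factorial k)) *
          (((hermite k).map (algebraMap ℤ ℝ)).eval t * Real.exp (w * t - t ^ 2 / 2)) := by
    funext t
    rw [Hnorm, aeval_hermite_eq, ← exp_mul_gauss]
    ring
  rw [h, integral_const_mul, integral_hermite_gauss]
  have key : (2 * π) ^ (-(1:ℝ) / 2) * Real.sqrt (2 * π) = 1 := by
    rw [Real.sqrt_eq_rpow, ← Real.rpow_add (by positivity)]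
    norm_num
  calc (2 * π) ^ (-(1:ℝ) / 2) / Real.sqrt (Nat.factorial k)
        * (Real.sqrt (2 * π) * Real.exp (w ^ 2 / 2) * w ^ k)
      = ((2 * π) ^ (-(1:ℝ) / 2) * Real.sqrt (2 * π)) * (Real.exp (w ^ 2 / 2) * w ^ k)
          / Real.sqrt (Nat.factorial k) := by ring
    _ = Real.exp (w ^ 2 / 2) * w ^ k / Real.sqrt (Nat.factorial k) := by rw [key, one_mul]

lemma sqrt_prod {ι : Type*} (s : Finset ι) (a : ι → ℝ) (ha : ∀ i, 0 ≤ a i) :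
    Real.sqrt (∏ i ∈ s, a i) = ∏ i ∈ s, Real.sqrt (a i) := by
  induction s using Finset.cons_induction with
  | empty => simp
  | cons i s his ih => rw [Finset.prod_cons, Finset.prod_cons, Real.sqrt_mul (ha i), ih]

lemma gaussD_eq_prod {d : ℕ} (x : Fin d → ℝ) :
    gaussD d x = ∏ j, ((2 * π) ^ (-(1:ℝ) / 2) * Real.exp (-((x j) ^ 2) / 2)) := by
  rw [Finset.prod_mul_distrib, Finset.prod_const, gaussD]
  congr 1
  · rw [Finset.card_univ, Fintype.card_fin,
      ← Real.rpow_natCast ((2 * π) ^ (-(1:ℝ) / 2)) d, ← Real.rpow_mul (by positivity)]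
    congr 1
    ring
  · rw [← Real.exp_sum]
    congr 1
    rw [← Finset.sum_div, Finset.sum_neg_distrib]

lemma hcoeff_exp {d : ℕ} (w : Fin d → ℝ) (k : Fin d → ℕ) :
    hCoeff (fun x => Real.exp (∑ j, w j * x j)) k
      = Real.exp ((∑ j, (w j) ^ 2) / 2) * (∏ j, (w j) ^ (k j))
          / Real.sqrt (∏ j, (Nat.factorial (k j) : ℝ)) := by
  have hint : (fun x : Fin d → ℝ => Real.exp (∑ j, w j * x j) * Hmulti k x * gaussD d x)
      = fun x => ∏ j, (fun t : ℝ => Real.exp (w j * t) * Hnorm (k j) t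
          * ((2 * π) ^ (-(1:ℝ) / 2) * Real.exp (-(t ^ 2) / 2))) (x j) := by
    funext x
    rw [Real.exp_sum, gaussD_eq_prod, Hmulti, ← Finset.prod_mul_distrib,
      ← Finset.prod_mul_distrib]
  have hfub := MeasureTheory.integral_fintype_prod_volume_eq_prod (ι := Fin d) (E := fun _ => ℝ)
    (f := fun j t => Real.exp (w j * t) * Hnorm (k j) t
      * ((2 * π) ^ (-(1:ℝ) / 2) * Real.exp (-(t ^ 2) / 2)))
  rw [hCoeff, hint, hfub]
  simp_rw [factor1D]
  rw [Finset.prod_div_distrib, Finset.prod_mul_distrib, ← Real.exp_sum,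
    ← sqrt_prod _ _ (fun i => by positivity), ← Finset.sum_div]

lemma eweight_pos {ω γ : ℝ} (hω : 0 < ω) (hγ : 0 < γ) (m : ℕ) : 0 < eweight ω γ m := by
  rw [eweight]; split <;> positivity

lemma sqint_exp {d : ℕ} (w : Fin d → ℝ) :
    GaussianSqInt (fun x : Fin d → ℝ => Real.exp (∑ j, w j * x j)) := by
  have hsq : (fun x : Fin d → ℝ => (Real.exp (∑ j, w j * x j)) ^ 2 * gaussD d x)
      = fun x => ∏ j, (fun t : ℝ => Real.exp (w j * t) ^ 2
          * ((2 * π) ^ (-(1:ℝ) / 2) * Real.exp (-(t ^ 2) / 2))) (x j) := by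
    funext x
    rw [Real.exp_sum, gaussD_eq_prod, ← Finset.prod_pow, ← Finset.prod_mul_distrib]
  rw [GaussianSqInt, hsq]
  refine MeasureTheory.Integrable.fintype_prod (𝕜 := ℝ) (E := ℝ)
    (f := fun j t => Real.exp (w j * t) ^ 2
      * ((2 * π) ^ (-(1:ℝ) / 2) * Real.exp (-(t ^ 2) / 2))) (fun j => ?_)
  refine ((integrable_poly_gauss 1 (2 * w j)).const_mul ((2 * π) ^ (-(1:ℝ) / 2))).congr ?_
  filter_upwards with t
  rw [Polynomial.eval_one, one_mul, ← exp_mul_gauss,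
    show 2 * w j * t = w j * t + w j * t by ring, Real.exp_add, sq]
  ring

lemma summable1D {ω γ : ℝ} (hω : ω ∈ Set.Ioo (0:ℝ) 1) (hγ : 0 < γ) (v : ℝ) :
    Summable (fun m : ℕ =>
      (eweight ω γ m)⁻¹ * (Real.exp (v ^ 2) * (v ^ 2) ^ m / (Nat.factorial m : ℝ))) := by
  have hsum := (Real.summable_pow_div_factorial (v ^ 2 / ω)).mul_left
    (Real.exp (v ^ 2) * max 1 γ⁻¹)
  refine Summable.of_nonneg_of_le (fun m => ?_) (fun m => ?_) hsum
  · have := eweight_pos hω.1 hγ m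
    positivity
  · rcases Nat.eq_zero_or_pos m with hm | hm
    · subst hm
      simp only [eweight, if_pos, pow_zero, Nat.factorial_zero, Nat.cast_one, div_one,
        mul_one, inv_one, one_mul]
      have h1 : (1:ℝ) ≤ max 1 γ⁻¹ := le_max_left _ _
      nlinarith [Real.exp_pos (v ^ 2)]
    · rw [eweight, if_neg hm.ne']
      have hωm : (0:ℝ) < ω ^ m := pow_pos hω.1 m
      have hfm : (0:ℝ) < (Nat.factorial m : ℝ) := by exact_mod_cast m.factorial_pos
      rw [div_pow, mul_inv]
      have hγle : γ⁻¹ ≤ max 1 γ⁻¹ := le_max_right _ _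
      have hE := (Real.exp_pos (v ^ 2)).le
      calc γ⁻¹ * (ω ^ m)⁻¹ * (Real.exp (v ^ 2) * (v ^ 2) ^ m / (Nat.factorial m : ℝ))
          = γ⁻¹ * (Real.exp (v ^ 2) * ((v ^ 2) ^ m / ω ^ m / (Nat.factorial m : ℝ))) := by
            simp only [div_eq_mul_inv, mul_inv]; ring
        _ ≤ max 1 γ⁻¹ * (Real.exp (v ^ 2) * ((v ^ 2) ^ m / ω ^ m / (Nat.factorial m : ℝ))) := by
            have : (0:ℝ) ≤ Real.exp (v ^ 2) * ((v ^ 2) ^ m / ω ^ m / (Nat.factorial m : ℝ)) := by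
              positivity
            nlinarith
        _ = Real.exp (v ^ 2) * max 1 γ⁻¹ * ((v ^ 2) ^ m / ω ^ m / (Nat.factorial m : ℝ)) := by
            ring

lemma summable_pi_prod : ∀ {d : ℕ} (c : Fin d → ℕ → ℝ), (∀ j m, 0 ≤ c j m) →
    (∀ j, Summable (c j)) → Summable (fun k : Fin d → ℕ => ∏ j, c j (k j)) := by
  intro d
  induction d with
  | zero =>
    intro c _ _
    exact Summable.of_finite
  | succ d ih =>
    intro c h0 hs
    set F : ℕ → ℝ := c 0 with hF
    set G : (Fin d → ℕ) → ℝ := fun k => ∏ j : Fin d, c j.succ (k j) with hG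
    have hsG : Summable G := ih (fun j => c j.succ) (fun j m => h0 _ _) (fun j => hs j.succ)
    have hF' : 0 ≤ F := fun m => h0 0 m
    have hG' : 0 ≤ G := fun k => Finset.prod_nonneg fun j _ => h0 _ _
    have hprod : Summable (fun p : ℕ × (Fin d → ℕ) => F p.1 * G p.2) :=
      (hs 0).mul_of_nonneg hsG hF' hG'
    refine ((Fin.consEquiv (fun _ : Fin (d+1) => ℕ)).summable_iff
      (f := fun k : Fin (d+1) → ℕ => ∏ j, c j (k j))).mp (hprod.congr fun p => ?_)
    simp only [Function.comp_apply, Fin.consEquiv_apply, Fin.prod_univ_succ, Fin.cons_zero,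
      Fin.cons_succ, hF, hG]

end AuxStmt8

/-- for `f(x) = exp(wᵀx)` the Hermite coefficients are
`f̂(k) = e^{wᵀw/2} w^k / √(k!)`, and `f` belongs to every Hermite space
`𝓗_{𝛆_{𝛚,𝛄}}` with exponentially decaying coefficients. -/
theorem stmt8 {d : ℕ} (w : Fin d → ℝ) :
    (∀ k : Fin d → ℕ,
      hCoeff (fun x => Real.exp (∑ j, w j * x j)) k
        = Real.exp ((∑ j, (w j) ^ 2) / 2) * (∏ j, (w j) ^ (k j))
            / Real.sqrt (∏ j, (Nat.factorial (k j) : ℝ))) ∧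
    (∀ ω γ : Fin d → ℝ, (∀ j, ω j ∈ Set.Ioo (0 : ℝ) 1) → (∀ j, 0 < γ j) →
      memHermite (eweights ω γ) (fun x => Real.exp (∑ j, w j * x j))) := by
  constructor
  · exact hcoeff_exp w
  · intro ω γ hω hγ
    refine ⟨?_, sqint_exp w, ?_⟩
    · exact Real.continuous_exp.comp
        (continuous_finset_sum _ fun j _ => continuous_const.mul (continuous_apply j))
    · have hterm : ∀ k : Fin d → ℕ,
          (eweights ω γ k)⁻¹ * (hCoeff (fun x => Real.exp (∑ j, w j * x j)) k) ^ 2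
          = ∏ j, ((eweight (ω j) (γ j) (k j))⁻¹
              * (Real.exp ((w j) ^ 2) * ((w j) ^ 2) ^ (k j) / (Nat.factorial (k j) : ℝ))) := by
        intro k
        have hfprod : (0:ℝ) ≤ ∏ j, (Nat.factorial (k j) : ℝ) := by positivity
        rw [hcoeff_exp w k, eweights, div_pow, Real.sq_sqrt hfprod, mul_pow,
          Finset.prod_mul_distrib, Finset.prod_div_distrib, Finset.prod_mul_distrib,
          ← Real.exp_sum, ← Finset.prod_inv_distrib]
        have hE : Real.exp ((∑ j, (w j) ^ 2) / 2) ^ 2 = Real.exp (∑ j, (w j) ^ 2) := by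
          rw [← Real.exp_nat_mul]
          congr 1
          push_cast
          ring
        have hP : (∏ j, (w j) ^ (k j)) ^ 2 = ∏ j, ((w j) ^ 2) ^ (k j) := by
          rw [← Finset.prod_pow]
          exact Finset.prod_congr rfl fun j _ => pow_right_comm _ _ _
        rw [hE, hP]
      refine (summable_congr hterm).mpr ?_
      refine summable_pi_prod (fun j m => (eweight (ω j) (γ j) m)⁻¹
          * (Real.exp ((w j) ^ 2) * ((w j) ^ 2) ^ m / (Nat.factorial m : ℝ)))
        (fun j m => ?_) (fun j => summable1D (hω j) (hγ j) (w j))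
      have := eweight_pos (hω j).1 (hγ j) m
      positivity


end
end

section
/- Let 𝛄 = (γ_1,γ_2,…) ∈ (0,∞)^ℕ be a non-increasing sequence of weights and 𝛂 = (α_1,α_2,…) ∈ (1,∞)^ℕ with inf_j α_j > 1. Consider for each d the Hermite space 𝓗_{𝐩_{𝛂,𝛄}} over ℝ^d built from the first d entries of 𝛂 and 𝛄. (1) If ∑_{j=1}^∞ γ_j < ∞, then multivariate integration in these spaces is strongly polynomially tractable: there is a constant c such that n_min(ε,d) ≤ c ε^{−2} for all d ∈ ℕ and ε ∈ (0,1). (2) If limsup_{d→∞} (∑_{j=1}^d γ_j)/ln(d) < ∞, then integration is polynomially tractable: there are constants c, q ≥ 0 with n_min(ε,d) ≤ c d^q ε^{−2} for all d ∈ ℕ and ε ∈ (0,1). -/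
open MeasureTheory Real Filter Asymptotics

noncomputable section

namespace Aux13
open Polynomial


/-- real Hermite polynomial -/
def heR (n : ℕ) : Polynomial ℝ := (hermite n).map (Int.castRingHom ℝ)

lemma heR_zero : heR 0 = 1 := by simp [heR, hermite_zero]

lemma heR_succ (n : ℕ) : heR (n+1) = X * heR n - derivative (heR n) := by
  simp [heR, hermite_succ, Polynomial.map_sub, Polynomial.map_mul, derivative_map]

lemma derivative_heR : ∀ n : ℕ, derivative (heR n) = C (n : ℝ) * heR (n-1) := by
  intro n
  induction n with
  | zero => simp [heR_zero]
  | succ m ih =>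
    rw [heR_succ, derivative_sub, derivative_mul, derivative_X, one_mul, ih]
    cases m with
    | zero => simp [heR_zero, heR_succ]
    | succ m' =>
      simp only [Nat.add_sub_cancel]
      rw [derivative_mul, derivative_C, zero_mul, zero_add, heR_succ m']
      push_cast
      simp only [C_add, C_1]
      ring

lemma aeval_hermite_eq (k : ℕ) (x : ℝ) : (Polynomial.aeval x) (hermite k) = (heR k).eval x := by
  rw [heR, eval_map, aeval_def]
  rfl

/-- unnormalized gaussian -/
def gg : ℝ → ℝ := fun x => rexp (-(x^2)/2)

lemma gg_pos (x : ℝ) : 0 < gg x := exp_pos _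
lemma gg_cont : Continuous gg := by
  unfold gg; fun_prop

lemma hasDerivAt_gg (x : ℝ) : HasDerivAt gg (-x * gg x) x := by
  have h1 : HasDerivAt (fun x : ℝ => -(x^2)/2) (-x) x := by
    have := (hasDerivAt_pow 2 x).neg.div_const 2
    refine this.congr_deriv ?_
    norm_num
    ring
  unfold gg
  convert h1.exp using 1
  ring

/-- polynomial times gaussian tends to zero -/
lemma tendsto_poly_gg_atTop (Q : Polynomial ℝ) (c : ℝ) (hc : 0 < c) :
    Tendsto (fun x => Q.eval x * rexp (-(x^2)/c)) atTop (nhds 0) := by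
  have hb : Tendsto (fun x => |Q.eval x / rexp x|) atTop (nhds 0) := by
    simpa using (Q.tendsto_div_exp_atTop).abs
  apply squeeze_zero_norm' _ hb
  filter_upwards [eventually_ge_atTop c, eventually_ge_atTop 0] with x hx hx0
  have hcx : x ≤ x^2 / c := by
    rw [le_div_iff₀ hc]
    nlinarith
  have hee : rexp (-(x^2)/c) ≤ rexp (-x) := by
    apply exp_le_exp.2
    rw [neg_div]
    exact neg_le_neg hcx
  calc ‖Q.eval x * rexp (-(x^2)/c)‖ = |Q.eval x| * rexp (-(x^2)/c) := by
        rw [Real.norm_eq_abs, abs_mul, abs_of_nonneg (exp_pos _).le]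
    _ ≤ |Q.eval x| * rexp (-x) := mul_le_mul_of_nonneg_left hee (abs_nonneg _)
    _ = |Q.eval x / rexp x| := by
        rw [abs_div, abs_of_nonneg (exp_pos x).le, Real.exp_neg, div_eq_mul_inv]

lemma tendsto_poly_gg_atBot (Q : Polynomial ℝ) (c : ℝ) (hc : 0 < c) :
    Tendsto (fun x => Q.eval x * rexp (-(x^2)/c)) atBot (nhds 0) := by
  have h2 := tendsto_poly_gg_atTop (Q.comp (-X)) c hc
  have := h2.comp tendsto_neg_atBot_atTop
  convert this using 2 with x
  simp [Function.comp, eval_comp]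

/-- global bound for polynomial times quarter-gaussian -/
lemma exists_bound_poly (Q : Polynomial ℝ) :
    ∃ C : ℝ, ∀ x, |Q.eval x| * rexp (-(x^2)/4) ≤ C := by
  have ht := tendsto_poly_gg_atTop Q 4 (by norm_num)
  have hb := tendsto_poly_gg_atBot Q 4 (by norm_num)
  have h1 : ∀ᶠ x in atTop, |Q.eval x * rexp (-(x^2)/4)| < 1 :=
    (ht.abs).eventually_lt_const (by norm_num)
  have h2 : ∀ᶠ x in atBot, |Q.eval x * rexp (-(x^2)/4)| < 1 :=
    (hb.abs).eventually_lt_const (by norm_num)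
  obtain ⟨A, hA⟩ := eventually_atTop.1 h1
  obtain ⟨B, hB⟩ := eventually_atBot.1 h2
  have hcont : ContinuousOn (fun x => |Q.eval x * rexp (-(x^2)/4)|) (Set.Icc B A) := by
    apply Continuous.continuousOn; fun_prop
  obtain ⟨C0, hC0⟩ := (isCompact_Icc (a := B) (b := A)).exists_bound_of_continuousOn hcont
  refine ⟨max C0 1, fun x => ?_⟩
  have habs : |Q.eval x| * rexp (-(x^2)/4) = |Q.eval x * rexp (-(x^2)/4)| := by
    rw [abs_mul, abs_of_nonneg (exp_pos _).le]
  rw [habs]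
  rcases le_total x A with hxA | hxA
  · rcases le_total B x with hBx | hBx
    · exact le_max_of_le_left (by simpa using hC0 x ⟨hBx, hxA⟩)
    · exact le_max_of_le_right (hB x hBx).le
  · exact le_max_of_le_right (hA x hxA).le

lemma integrable_poly_gg (Q : Polynomial ℝ) :
    Integrable (fun x => Q.eval x * gg x) := by
  obtain ⟨C, hC⟩ := exists_bound_poly Q
  have hint : Integrable (fun x => C * rexp (-(4:ℝ)⁻¹ * x^2)) :=
    (integrable_exp_neg_mul_sq (by norm_num : (0:ℝ) < 4⁻¹)).const_mul C
  apply hint.mono'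
  · exact (Q.continuous.mul gg_cont).aestronglyMeasurable
  · filter_upwards with x
    rw [Real.norm_eq_abs, abs_mul, abs_of_nonneg (gg_pos x).le]
    have : gg x = rexp (-(x^2)/4) * rexp (-(x^2)/4) := by
      rw [← Real.exp_add]; unfold gg; ring_nf
    rw [this, ← mul_assoc]
    have h2 : rexp (-(x^2)/4) ≤ 1 := by
      rw [Real.exp_le_one_iff]
      nlinarith [sq_nonneg x]
    calc |Q.eval x| * rexp (-(x^2)/4) * rexp (-(x^2)/4)
        ≤ C * rexp (-(x^2)/4) := mul_le_mul_of_nonneg_right (hC x) (exp_pos _).le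
      _ = C * rexp (-(4:ℝ)⁻¹ * x^2) := by ring_nf

/-- integral of full-line derivative with vanishing limits -/
lemma integral_deriv_eq_zero (U V : ℝ → ℝ) (hd : ∀ x, HasDerivAt U (V x) x)
    (hi : Integrable V) (ht : Tendsto U atTop (nhds 0)) (hb : Tendsto U atBot (nhds 0)) :
    ∫ x, V x = 0 := by
  have h1 : Tendsto (fun T : ℝ => ∫ x in (-T)..T, V x) atTop (nhds (∫ x, V x)) :=
    intervalIntegral_tendsto_integral hi tendsto_neg_atTop_atBot tendsto_id
  have h2 : ∀ T : ℝ, ∫ x in (-T)..T, V x = U T - U (-T) := fun T =>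
    intervalIntegral.integral_eq_sub_of_hasDerivAt (fun x _ => hd x) hi.intervalIntegrable
  have h3 : Tendsto (fun T : ℝ => U T - U (-T)) atTop (nhds 0) := by
    have := ht.sub (hb.comp tendsto_neg_atTop_atBot)
    simpa using this
  have := h1.congr (fun T => (h2 T))
  exact tendsto_nhds_unique this h3


/-! ## The Hermite L² inner products -/

def J (j k : ℕ) : ℝ := ∫ x, (heR j).eval x * (heR k).eval x * gg x

lemma J_symm (j k : ℕ) : J j k = J k j := by
  unfold J
  congr 1; funext x; ring

lemma integrable_J (j k : ℕ) : Integrable fun x => (heR j).eval x * (heR k).eval x * gg x := by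
  have := integrable_poly_gg (heR j * heR k)
  simpa [eval_mul] using this

lemma ibp (j k : ℕ) :
    ∫ x, ((derivative (heR j)).eval x * (heR k).eval x
      + (heR j).eval x * (derivative (heR k)).eval x
      - x * ((heR j).eval x * (heR k).eval x)) * gg x = 0 := by
  set R : Polynomial ℝ := derivative (heR j) * heR k + heR j * derivative (heR k)
      - X * (heR j * heR k) with hR
  have hVeq : ∀ x : ℝ, ((derivative (heR j)).eval x * (heR k).eval x
      + (heR j).eval x * (derivative (heR k)).eval x
      - x * ((heR j).eval x * (heR k).eval x)) * gg x = R.eval x * gg x := by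
    intro x; simp [hR, eval_mul, eval_add, eval_sub]
  have hint : Integrable fun x => R.eval x * gg x := integrable_poly_gg R
  have hd : ∀ x : ℝ, HasDerivAt (fun y => (heR j).eval y * (heR k).eval y * gg y)
      (R.eval x * gg x) x := by
    intro x
    have h1 := (((heR j).hasDerivAt x).mul ((heR k).hasDerivAt x)).mul (hasDerivAt_gg x)
    refine h1.congr_deriv ?_
    simp only [hR, eval_mul, eval_add, eval_sub, eval_X, Pi.mul_apply]
    ring
  have ht : Tendsto (fun y => (heR j).eval y * (heR k).eval y * gg y) atTop (nhds 0) := by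
    have := tendsto_poly_gg_atTop (heR j * heR k) 2 (by norm_num)
    simpa [eval_mul, gg] using this
  have hb : Tendsto (fun y => (heR j).eval y * (heR k).eval y * gg y) atBot (nhds 0) := by
    have := tendsto_poly_gg_atBot (heR j * heR k) 2 (by norm_num)
    simpa [eval_mul, gg] using this
  calc ∫ x, ((derivative (heR j)).eval x * (heR k).eval x
      + (heR j).eval x * (derivative (heR k)).eval x
      - x * ((heR j).eval x * (heR k).eval x)) * gg x
      = ∫ x, R.eval x * gg x := by congr 1; funext x; exact hVeq x
    _ = 0 := integral_deriv_eq_zero _ _ hd hint ht hb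

lemma J_succ (j k : ℕ) : J j (k+1) = (j : ℝ) * J (j-1) k := by
  have h0 := ibp j k
  -- split the integral
  have e1 : ∀ x : ℝ, ((derivative (heR j)).eval x * (heR k).eval x
      + (heR j).eval x * (derivative (heR k)).eval x
      - x * ((heR j).eval x * (heR k).eval x)) * gg x
      = (derivative (heR j)).eval x * (heR k).eval x * gg x
        - (heR j).eval x * (heR (k+1)).eval x * gg x := by
    intro x
    rw [heR_succ]
    simp only [eval_sub, eval_mul, eval_X]
    ring
  rw [show (∫ x, ((derivative (heR j)).eval x * (heR k).eval x
      + (heR j).eval x * (derivative (heR k)).eval x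
      - x * ((heR j).eval x * (heR k).eval x)) * gg x)
      = ∫ x, ((derivative (heR j)).eval x * (heR k).eval x * gg x
        - (heR j).eval x * (heR (k+1)).eval x * gg x) from by congr 1; funext x; exact e1 x]
    at h0
  have hint1 : Integrable fun x => (derivative (heR j)).eval x * (heR k).eval x * gg x := by
    have := integrable_poly_gg (derivative (heR j) * heR k)
    simpa [eval_mul] using this
  have h2 := integral_sub hint1 (integrable_J j (k+1))
  rw [h0] at h2
  have h3 : J j (k+1) = ∫ x, (derivative (heR j)).eval x * (heR k).eval x * gg x := by
    unfold J; linarith [h2]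
  rw [h3]
  have h4 : ∀ x : ℝ, (derivative (heR j)).eval x * (heR k).eval x * gg x
      = (j:ℝ) * ((heR (j-1)).eval x * (heR k).eval x * gg x) := by
    intro x
    rw [derivative_heR j]
    simp only [eval_mul, eval_C]
    ring
  rw [show (∫ x, (derivative (heR j)).eval x * (heR k).eval x * gg x)
      = ∫ x, (j:ℝ) * ((heR (j-1)).eval x * (heR k).eval x * gg x) from by
        congr 1; funext x; exact h4 x]
  rw [integral_const_mul]
  rfl

lemma J_zero_left (k : ℕ) : J 0 (k+1) = 0 := by
  have := J_succ 0 k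
  simpa using this

lemma J_self_zero : J 0 0 = Real.sqrt (2*π) := by
  unfold J
  have he : (fun x : ℝ => (heR 0).eval x * (heR 0).eval x * gg x)
      = fun x : ℝ => rexp (-(2⁻¹:ℝ) * x^2) := by
    funext x
    simp only [heR_zero, eval_one, one_mul, gg]
    ring_nf
  rw [he, integral_gaussian]
  congr 1
  ring

lemma J_eq (k j : ℕ) : J j k = if j = k then (k.factorial : ℝ) * Real.sqrt (2*π) else 0 := by
  induction k generalizing j with
  | zero =>
    cases j with
    | zero => simpa using J_self_zero
    | succ j' =>
      rw [J_symm, J_zero_left]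
      simp
  | succ k' ih =>
    cases j with
    | zero =>
      rw [J_zero_left]
      simp
    | succ j' =>
      rw [J_succ, Nat.add_sub_cancel, ih j']
      by_cases hjk : j' = k'
      · subst hjk
        simp [Nat.factorial_succ]
        push_cast
        ring
      · have : ¬ (j' + 1 = k' + 1) := by omega
        simp [hjk, this]


end Aux13
namespace Aux13
open Polynomial

/-! ## Normalized univariate integrals -/

/-- normalized 1-dimensional gaussian density -/
def g1 : ℝ → ℝ := fun x => (2*π) ^ (-(2⁻¹:ℝ)) * gg x

lemma g1_pos (x : ℝ) : 0 < g1 x := by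
  have h2pi : (0:ℝ) < 2*π := by positivity
  exact mul_pos (Real.rpow_pos_of_pos h2pi _) (gg_pos x)

lemma g1_cont : Continuous g1 := continuous_const.mul gg_cont

lemma Hnorm_eq (k : ℕ) (x : ℝ) : Hnorm k x = (heR k).eval x / Real.sqrt (k.factorial) := by
  rw [Hnorm, aeval_hermite_eq]

lemma Hnorm_zero (x : ℝ) : Hnorm 0 x = 1 := by
  rw [Hnorm_eq]
  simp [heR_zero]

lemma Hnorm_cont (k : ℕ) : Continuous (Hnorm k) := by
  unfold Hnorm
  exact (Polynomial.continuous_aeval _).div_const _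

lemma integrable_HHg1 (j k : ℕ) : Integrable fun x => Hnorm j x * Hnorm k x * g1 x := by
  have h := (integrable_J j k).const_mul ((2*π) ^ (-(2⁻¹:ℝ)) / (Real.sqrt j.factorial * Real.sqrt k.factorial))
  apply h.congr
  filter_upwards with x
  rw [Hnorm_eq, Hnorm_eq, g1]
  ring

lemma sqrt_fact_pos (k : ℕ) : (0:ℝ) < Real.sqrt k.factorial := by
  apply Real.sqrt_pos.2
  exact_mod_cast k.factorial_pos

lemma uni_ortho (j k : ℕ) : (∫ x, Hnorm j x * Hnorm k x * g1 x) = if j = k then 1 else 0 := by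
  have heq : (fun x => Hnorm j x * Hnorm k x * g1 x)
      = fun x => ((2*π) ^ (-(2⁻¹:ℝ)) / (Real.sqrt j.factorial * Real.sqrt k.factorial))
          * ((heR j).eval x * (heR k).eval x * gg x) := by
    funext x
    rw [Hnorm_eq, Hnorm_eq, g1]
    ring
  rw [heq, integral_const_mul]
  have : (∫ x, (heR j).eval x * (heR k).eval x * gg x) = J j k := rfl
  rw [this, J_eq]
  by_cases hjk : j = k
  · subst hjk
    rw [if_pos rfl, if_pos rfl]
    have h2pi : (0:ℝ) < 2*π := by positivity
    have hs : Real.sqrt (2*π) = (2*π) ^ ((2⁻¹:ℝ)) := by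
      rw [Real.sqrt_eq_rpow]; norm_num
    have hrp : ((2*π) ^ (-(2⁻¹:ℝ))) * ((2*π):ℝ) ^ ((2⁻¹:ℝ)) = 1 := by
      rw [← Real.rpow_add h2pi]; norm_num
    have hff : Real.sqrt j.factorial * Real.sqrt j.factorial = (j.factorial:ℝ) :=
      Real.mul_self_sqrt (by positivity)
    have hfne : (j.factorial:ℝ) ≠ 0 := by positivity
    have hkey : (2*π) ^ (-(2⁻¹:ℝ)) * ((j.factorial:ℝ) * (2*π) ^ ((2⁻¹:ℝ)))
        = (j.factorial:ℝ) := by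
      linear_combination (j.factorial:ℝ) * hrp
    rw [hff, hs, div_mul_eq_mul_div, hkey, div_self hfne]
  · simp [hjk]

lemma uni_int (k : ℕ) : (∫ x, Hnorm k x * g1 x) = if k = 0 then 1 else 0 := by
  have h := uni_ortho 0 k
  have heq : (fun x => Hnorm 0 x * Hnorm k x * g1 x) = fun x => Hnorm k x * g1 x := by
    funext x; rw [Hnorm_zero, one_mul]
  rw [heq] at h
  rw [h]
  by_cases hk : k = 0 <;> simp [hk, eq_comm]

lemma integrable_Hg1 (k : ℕ) : Integrable fun x => Hnorm k x * g1 x := by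
  have h := integrable_HHg1 0 k
  apply h.congr
  filter_upwards with x
  rw [Hnorm_zero, one_mul]

lemma uni_int1 : (∫ x, g1 x) = 1 := by
  have h := uni_int 0
  have heq : (fun x => Hnorm 0 x * g1 x) = fun x => g1 x := by
    funext x; rw [Hnorm_zero, one_mul]
  rw [heq] at h
  simpa using h

lemma integrable_g1 : Integrable g1 := by
  have h := integrable_Hg1 0
  apply h.congr
  filter_upwards with x
  rw [Hnorm_zero, one_mul]

end Aux13

namespace Aux13

/-! ## Multivariate integrals -/

variable {d : ℕ}

lemma gaussD_eq_prod (x : Fin d → ℝ) : gaussD d x = ∏ j, g1 (x j) := by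
  unfold gaussD g1 gg
  rw [Finset.prod_mul_distrib, ← Real.exp_sum]
  congr 1
  · rw [Finset.prod_const, Finset.card_univ, Fintype.card_fin,
      ← Real.rpow_natCast ((2*π) ^ (-(2⁻¹:ℝ))) d, ← Real.rpow_mul (by positivity)]
    congr 1
    ring
  · congr 1
    rw [neg_div, Finset.sum_div, ← Finset.sum_neg_distrib]
    congr 1; funext i
    ring

lemma gaussD_pos (x : Fin d → ℝ) : 0 < gaussD d x := by
  rw [gaussD_eq_prod]
  exact Finset.prod_pos fun j _ => g1_pos _

lemma gaussD_cont : Continuous (gaussD d) := by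
  unfold gaussD
  fun_prop

lemma Hmulti_zero (x : Fin d → ℝ) : Hmulti (0 : Fin d → ℕ) x = 1 := by
  unfold Hmulti
  simp [Hnorm_zero]

lemma Hmulti_cont (k : Fin d → ℕ) : Continuous (Hmulti k) := by
  unfold Hmulti
  apply continuous_finset_prod
  intro j _
  exact (Hnorm_cont (k j)).comp (continuous_apply j)

lemma HH_gauss_eq (k l : Fin d → ℕ) (x : Fin d → ℝ) :
    Hmulti k x * Hmulti l x * gaussD d x
      = ∏ j, (Hnorm (k j) (x j) * Hnorm (l j) (x j) * g1 (x j)) := by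
  rw [gaussD_eq_prod]
  unfold Hmulti
  rw [← Finset.prod_mul_distrib, ← Finset.prod_mul_distrib]

lemma integrable_HHgauss (k l : Fin d → ℕ) :
    Integrable (fun x : Fin d → ℝ => Hmulti k x * Hmulti l x * gaussD d x) := by
  have h : ∀ j : Fin d, Integrable fun t : ℝ => Hnorm (k j) t * Hnorm (l j) t * g1 t :=
    fun j => integrable_HHg1 _ _
  have := MeasureTheory.Integrable.fintype_prod (𝕜 := ℝ)
    (f := fun (j : Fin d) (t : ℝ) => Hnorm (k j) t * Hnorm (l j) t * g1 t) h
  apply this.congr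
  filter_upwards with x
  rw [HH_gauss_eq]

lemma integral_HHgauss (k l : Fin d → ℕ) :
    (∫ x : Fin d → ℝ, Hmulti k x * Hmulti l x * gaussD d x) = if k = l then 1 else 0 := by
  have heq : (fun x : Fin d → ℝ => Hmulti k x * Hmulti l x * gaussD d x)
      = fun x : Fin d → ℝ => ∏ j, (Hnorm (k j) (x j) * Hnorm (l j) (x j) * g1 (x j)) := by
    funext x; exact HH_gauss_eq k l x
  rw [heq, MeasureTheory.integral_fintype_prod_volume_eq_prod (𝕜 := ℝ)
    (f := fun (j : Fin d) (t : ℝ) => Hnorm (k j) t * Hnorm (l j) t * g1 t)]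
  by_cases hkl : k = l
  · subst hkl
    rw [if_pos rfl]
    apply Finset.prod_eq_one
    intro j _
    rw [uni_ortho]
    simp
  · rw [if_neg hkl]
    have : ∃ j, k j ≠ l j := by
      by_contra hc
      push_neg at hc
      exact hkl (funext hc)
    obtain ⟨j0, hj0⟩ := this
    apply Finset.prod_eq_zero (Finset.mem_univ j0)
    rw [uni_ortho, if_neg hj0]

lemma integrable_Hgauss (k : Fin d → ℕ) :
    Integrable (fun x : Fin d → ℝ => Hmulti k x * gaussD d x) := by
  apply (integrable_HHgauss k 0).congr
  filter_upwards with x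
  rw [Hmulti_zero, mul_one]

lemma integral_Hgauss (k : Fin d → ℕ) :
    (∫ x : Fin d → ℝ, Hmulti k x * gaussD d x) = if k = 0 then 1 else 0 := by
  have h := integral_HHgauss k 0
  have heq : (fun x : Fin d → ℝ => Hmulti k x * Hmulti 0 x * gaussD d x)
      = fun x : Fin d → ℝ => Hmulti k x * gaussD d x := by
    funext x; rw [Hmulti_zero, mul_one]
  rw [heq] at h
  exact h

lemma integrable_gaussD : Integrable (gaussD d) := by
  apply (integrable_Hgauss (0 : Fin d → ℕ)).congr
  filter_upwards with x
  rw [Hmulti_zero, one_mul]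

lemma integral_gaussD : (∫ x : Fin d → ℝ, gaussD d x) = 1 := by
  have h := integral_Hgauss (0 : Fin d → ℕ)
  have heq : (fun x : Fin d → ℝ => Hmulti 0 x * gaussD d x) = fun x => gaussD d x := by
    funext x; rw [Hmulti_zero, one_mul]
  rw [heq] at h
  simpa using h

end Aux13

namespace Aux13

variable {d : ℕ}

lemma abs_mul_le_half (a b : ℝ) : |a * b| ≤ (a^2 + b^2)/2 := by
  rw [abs_mul]
  nlinarith [sq_nonneg (|a| - |b|), sq_abs a, sq_abs b, abs_nonneg a, abs_nonneg b]

lemma integrable_f_Hgauss {f : (Fin d → ℝ) → ℝ} (hc : Continuous f)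
    (hsq : GaussianSqInt f) (k : Fin d → ℕ) :
    Integrable (fun x => f x * Hmulti k x * gaussD d x) := by
  have hint : Integrable (fun x : Fin d → ℝ =>
      ((f x)^2 * gaussD d x + Hmulti k x * Hmulti k x * gaussD d x)/2) :=
    (hsq.add (integrable_HHgauss k k)).div_const 2
  apply hint.mono'
  · exact ((hc.mul (Hmulti_cont k)).mul gaussD_cont).aestronglyMeasurable
  · filter_upwards with x
    rw [Real.norm_eq_abs]
    have h1 : |f x * Hmulti k x * gaussD d x| = |f x * Hmulti k x| * gaussD d x := by
      rw [abs_mul, abs_of_nonneg (gaussD_pos x).le]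
    rw [h1]
    have h2 := abs_mul_le_half (f x) (Hmulti k x)
    calc |f x * Hmulti k x| * gaussD d x
        ≤ ((f x)^2 + (Hmulti k x)^2)/2 * gaussD d x :=
          mul_le_mul_of_nonneg_right h2 (gaussD_pos x).le
      _ = ((f x)^2 * gaussD d x + Hmulti k x * Hmulti k x * gaussD d x)/2 := by ring

lemma integrable_f_gauss {f : (Fin d → ℝ) → ℝ} (hc : Continuous f)
    (hsq : GaussianSqInt f) : Integrable (fun x => f x * gaussD d x) := by
  apply (integrable_f_Hgauss hc hsq 0).congr
  filter_upwards with x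
  rw [Hmulti_zero, mul_one]

lemma hCoeff_sub {f g : (Fin d → ℝ) → ℝ} (k : Fin d → ℕ)
    (hf : Integrable (fun x => f x * Hmulti k x * gaussD d x))
    (hg : Integrable (fun x => g x * Hmulti k x * gaussD d x)) :
    hCoeff (fun x => f x - g x) k = hCoeff f k - hCoeff g k := by
  unfold hCoeff
  rw [show (fun x => (f x - g x) * Hmulti k x * gaussD d x)
      = fun x => f x * Hmulti k x * gaussD d x - g x * Hmulti k x * gaussD d x from by
    funext x; ring]
  exact integral_sub hf hg

lemma hCoeff_const_mul (c : ℝ) (f : (Fin d → ℝ) → ℝ) (k : Fin d → ℕ) :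
    hCoeff (fun x => c * f x) k = c * hCoeff f k := by
  unfold hCoeff
  rw [show (fun x => (c * f x) * Hmulti k x * gaussD d x)
      = fun x => c * (f x * Hmulti k x * gaussD d x) from by funext x; ring]
  exact integral_const_mul c _

lemma hCoeff_finsum (F : Finset (Fin d → ℕ)) (a : (Fin d → ℕ) → ℝ) (k : Fin d → ℕ) :
    hCoeff (fun x => ∑ l ∈ F, a l * Hmulti l x) k = if k ∈ F then a k else 0 := by
  unfold hCoeff
  rw [show (fun x => (∑ l ∈ F, a l * Hmulti l x) * Hmulti k x * gaussD d x)
      = fun x => ∑ l ∈ F, a l * (Hmulti l x * Hmulti k x * gaussD d x) from by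
    funext x; rw [Finset.sum_mul, Finset.sum_mul]; congr 1; funext l; ring]
  rw [integral_finset_sum F (fun l _ => (integrable_HHgauss l k).const_mul (a l))]
  have : ∀ l ∈ F, (∫ x : Fin d → ℝ, a l * (Hmulti l x * Hmulti k x * gaussD d x))
      = if l = k then a l else 0 := by
    intro l _
    rw [integral_const_mul, integral_HHgauss]
    by_cases h : l = k <;> simp [h]
  rw [Finset.sum_congr rfl this, Finset.sum_ite_eq' F k a]

lemma qmcInt_eq_hCoeff_zero (f : (Fin d → ℝ) → ℝ) : qmcInt f = hCoeff f 0 := by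
  unfold qmcInt hCoeff
  congr 1; funext x
  rw [Hmulti_zero, mul_one]

lemma qmcInt_sub {f g : (Fin d → ℝ) → ℝ}
    (hf : Integrable (fun x => f x * gaussD d x))
    (hg : Integrable (fun x => g x * gaussD d x)) :
    qmcInt (fun x => f x - g x) = qmcInt f - qmcInt g := by
  unfold qmcInt
  rw [show (fun x => (f x - g x) * gaussD d x)
      = fun x => f x * gaussD d x - g x * gaussD d x from by funext x; ring]
  exact integral_sub hf hg

lemma qmcInt_const_mul (c : ℝ) (f : (Fin d → ℝ) → ℝ) :
    qmcInt (fun x => c * f x) = c * qmcInt f := by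
  unfold qmcInt
  rw [show (fun x => (c * f x) * gaussD d x) = fun x => c * (f x * gaussD d x) from by
    funext x; ring]
  exact integral_const_mul c _

lemma qmcRule_sub {n : ℕ} (f g : (Fin d → ℝ) → ℝ) (P : Fin n → Fin d → ℝ) :
    qmcRule (fun x => f x - g x) P = qmcRule f P - qmcRule g P := by
  unfold qmcRule
  rw [Finset.sum_sub_distrib]
  ring

lemma qmcRule_const_mul {n : ℕ} (c : ℝ) (f : (Fin d → ℝ) → ℝ) (P : Fin n → Fin d → ℝ) :
    qmcRule (fun x => c * f x) P = c * qmcRule f P := by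
  unfold qmcRule
  rw [← Finset.mul_sum]
  ring

lemma pweight_pos {α γ : ℝ} (hγ : 0 < γ) (k : ℕ) : 0 < pweight α γ k := by
  unfold pweight
  split
  · exact one_pos
  · apply mul_pos hγ
    apply Real.rpow_pos_of_pos
    have : k ≠ 0 := by assumption
    exact_mod_cast Nat.pos_of_ne_zero this

lemma pweights_pos {αd γd : Fin d → ℝ} (hγ : ∀ j, 0 < γd j) (k : Fin d → ℕ) :
    0 < pweights αd γd k := by
  unfold pweights
  exact Finset.prod_pos fun j _ => pweight_pos (hγ j) _

lemma pweights_zero (αd γd : Fin d → ℝ) : pweights αd γd (0 : Fin d → ℕ) = 1 := by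
  unfold pweights pweight
  simp

end Aux13

namespace Aux13

/-! ## The worst-case error bound -/

def wP {d n : ℕ} (P : Fin n → Fin d → ℝ) (k : Fin d → ℕ) : ℝ :=
  (1 / (n:ℝ)) * ∑ i, Hmulti k (P i)

def errSet (d n : ℕ) (r : (Fin d → ℕ) → ℝ) (P : Fin n → Fin d → ℝ) : Set ℝ :=
  {e : ℝ | ∃ f : (Fin d → ℝ) → ℝ,
    memHermite r f ∧ hNormSq r f ≤ 1 ∧ e = |qmcInt f - qmcRule f P|}

lemma wce_eq (d n : ℕ) (r : (Fin d → ℕ) → ℝ) (P : Fin n → Fin d → ℝ) :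
    wce d n r P = sSup (errSet d n r P) := rfl

lemma zero_mem_errSet (d n : ℕ) (r : (Fin d → ℕ) → ℝ) (P : Fin n → Fin d → ℝ) :
    (0:ℝ) ∈ errSet d n r P := by
  refine ⟨fun _ => 0, ⟨continuous_const, ?_, ?_⟩, ?_, ?_⟩
  · unfold GaussianSqInt
    have : (fun x : Fin d → ℝ => ((0:ℝ))^2 * gaussD d x) = fun _ => (0:ℝ) := by
      funext x; ring
    rw [this]
    exact integrable_zero _ _ _
  · have : (fun k : Fin d → ℕ => (r k)⁻¹ * hCoeff (fun _ => (0:ℝ)) k ^ 2)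
        = fun _ => (0:ℝ) := by
      funext k
      unfold hCoeff
      simp
    rw [this]
    exact summable_zero
  · unfold hNormSq
    have : (fun k : Fin d → ℕ => (r k)⁻¹ * hCoeff (fun _ => (0:ℝ)) k ^ 2)
        = fun _ => (0:ℝ) := by
      funext k; unfold hCoeff; simp
    rw [this, tsum_zero]
    norm_num
  · unfold qmcInt qmcRule
    simp

lemma claimA {d n : ℕ} (hn : 0 < n) (αd γd : Fin d → ℝ) (hγ : ∀ j, 0 < γd j)
    (P : Fin n → Fin d → ℝ)
    (hsum : Summable fun k : Fin d → ℕ =>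
      if k = 0 then 0 else pweights αd γd k * wP P k ^ 2)
    (f : (Fin d → ℝ) → ℝ) (hfc : Continuous f) (hfsq : GaussianSqInt f)
    (hfsum : Summable fun k => (pweights αd γd k)⁻¹ * hCoeff f k ^ 2)
    (hnorm : hNormSq (pweights αd γd) f ≤ 1)
    (s : ℝ)
    (hub : ∀ e ∈ errSet d n (pweights αd γd) P, e ≤ s)
    (F : Finset (Fin d → ℕ)) (h0F : 0 ∈ F) :
    |qmcInt f - qmcRule f P|
      ≤ Real.sqrt (∑' k : Fin d → ℕ, if k = 0 then 0 else pweights αd γd k * wP P k ^ 2)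
        + s * Real.sqrt (∑' k : Fin d → ℕ,
            if k ∈ F then 0 else (pweights αd γd k)⁻¹ * hCoeff f k ^ 2) := by
  have hs0 : 0 ≤ s := hub 0 (zero_mem_errSet d n _ P)
  set pw := pweights αd γd with hpw
  have hpwpos : ∀ k, 0 < pw k := pweights_pos hγ
  set E : ℝ := ∑' k : Fin d → ℕ, if k = 0 then 0 else pw k * wP P k ^ 2 with hE
  set a : (Fin d → ℕ) → ℝ := hCoeff f with ha
  set g : (Fin d → ℝ) → ℝ := fun x => ∑ l ∈ F, a l * Hmulti l x with hg
  set h : (Fin d → ℝ) → ℝ := fun x => f x - g x with hh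
  have hgc : Continuous g := by
    apply continuous_finset_sum
    intro l _
    exact continuous_const.mul (Hmulti_cont l)
  have hgsq : GaussianSqInt g := by
    unfold GaussianSqInt
    have heq : (fun x => (g x)^2 * gaussD d x)
        = fun x => ∑ l ∈ F, ∑ m ∈ F, (a l * a m) * (Hmulti l x * Hmulti m x * gaussD d x) := by
      funext x
      rw [hg, sq, Finset.sum_mul_sum, Finset.sum_mul]
      apply Finset.sum_congr rfl; intro l _
      rw [Finset.sum_mul]
      apply Finset.sum_congr rfl; intro m _
      ring
    rw [heq]
    apply integrable_finset_sum; intro l _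
    apply integrable_finset_sum; intro m _
    exact (integrable_HHgauss l m).const_mul _
  have hint_gH : ∀ k, Integrable fun x => g x * Hmulti k x * gaussD d x := by
    intro k
    have heq : (fun x => g x * Hmulti k x * gaussD d x)
        = fun x => ∑ l ∈ F, a l * (Hmulti l x * Hmulti k x * gaussD d x) := by
      funext x
      rw [hg, Finset.sum_mul, Finset.sum_mul]
      apply Finset.sum_congr rfl; intro l _
      ring
    rw [heq]
    exact integrable_finset_sum _ fun l _ => (integrable_HHgauss l k).const_mul _
  have hint_fH := integrable_f_Hgauss hfc hfsq
  have hcoeff_g : ∀ k, hCoeff g k = if k ∈ F then a k else 0 := fun k => hCoeff_finsum F a k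
  have hcoeff_h : ∀ k, hCoeff h k = if k ∈ F then 0 else a k := by
    intro k
    rw [hh, hCoeff_sub k (hint_fH k) (hint_gH k), hcoeff_g]
    by_cases hk : k ∈ F <;> simp [hk, ha]
  have hhc : Continuous h := hfc.sub hgc
  have hhsq : GaussianSqInt h := by
    unfold GaussianSqInt
    have hint2 : Integrable (fun x => 2*((f x)^2 * gaussD d x) + 2*((g x)^2 * gaussD d x)) :=
      (hfsq.const_mul 2).add (hgsq.const_mul 2)
    apply hint2.mono'
    · exact ((hhc.pow 2).mul gaussD_cont).aestronglyMeasurable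
    · filter_upwards with x
      rw [Real.norm_eq_abs, abs_of_nonneg (mul_nonneg (sq_nonneg (h x)) (gaussD_pos x).le)]
      have hg0 := (gaussD_pos (d := d) x).le
      have hsq2 : (h x)^2 ≤ 2*(f x)^2 + 2*(g x)^2 := by
        have : h x = f x - g x := rfl
        rw [this]
        nlinarith [sq_nonneg (f x + g x)]
      nlinarith [mul_le_mul_of_nonneg_right hsq2 hg0]
  have hsum_h : Summable fun k => (pw k)⁻¹ * hCoeff h k ^ 2 := by
    apply Summable.of_nonneg_of_le _ _ hfsum
    · intro k; exact mul_nonneg (inv_nonneg.2 (hpwpos k).le) (sq_nonneg _)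
    · intro k
      rw [hcoeff_h]
      by_cases hk : k ∈ F
      · simp only [if_pos hk, ne_eq]
        rw [zero_pow (by norm_num : (2:ℕ) ≠ 0), mul_zero]
        exact mul_nonneg (inv_nonneg.2 (hpwpos k).le) (sq_nonneg _)
      · simp [hk]
  set t : ℝ := ∑' k : Fin d → ℕ, if k ∈ F then 0 else (pw k)⁻¹ * a k ^ 2 with htdef
  have hnorm_h : hNormSq pw h = t := by
    unfold hNormSq
    rw [htdef]
    apply tsum_congr; intro k
    rw [hcoeff_h]
    by_cases hk : k ∈ F <;> simp [hk]
  have ht0 : 0 ≤ t := by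
    rw [← hnorm_h]
    unfold hNormSq
    apply tsum_nonneg; intro k
    exact mul_nonneg (inv_nonneg.2 (hpwpos k).le) (sq_nonneg _)
  -- membership of scaled h
  have hmem_ch : ∀ c : ℝ, memHermite pw (fun x => c * h x)
      ∧ hNormSq pw (fun x => c * h x) = c^2 * t := by
    intro c
    have hcoeff_ch : ∀ k, hCoeff (fun x => c * h x) k = c * hCoeff h k :=
      fun k => hCoeff_const_mul c h k
    have hterm : ∀ k, (pw k)⁻¹ * hCoeff (fun x => c * h x) k ^ 2
        = c^2 * ((pw k)⁻¹ * hCoeff h k ^ 2) := by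
      intro k; rw [hcoeff_ch]; ring
    refine ⟨⟨continuous_const.mul hhc, ?_, ?_⟩, ?_⟩
    · unfold GaussianSqInt
      have heq : (fun x => (c * h x)^2 * gaussD d x)
          = fun x => c^2 * ((h x)^2 * gaussD d x) := by funext x; ring
      rw [heq]
      exact hhsq.const_mul _
    · exact (hsum_h.mul_left (c^2)).congr (fun k => (hterm k).symm)
    · unfold hNormSq
      rw [tsum_congr hterm, tsum_mul_left, ← hnorm_h]
      rfl
  have herr_ch : ∀ c : ℝ, c^2 * t ≤ 1 →
      |c| * |qmcInt h - qmcRule h P| ≤ s := by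
    intro c hc1
    obtain ⟨hmem, hns⟩ := hmem_ch c
    have hmemS : |qmcInt (fun x => c * h x) - qmcRule (fun x => c * h x) P|
        ∈ errSet d n pw P := ⟨fun x => c * h x, hmem, by rw [hns]; exact hc1, rfl⟩
    have := hub _ hmemS
    rw [qmcInt_const_mul, qmcRule_const_mul, ← mul_sub, abs_mul] at this
    exact this
  have hA : |qmcInt h - qmcRule h P| ≤ s * Real.sqrt t := by
    rcases eq_or_lt_of_le ht0 with ht0' | htpos
    · -- t = 0
      have hAz : qmcInt h - qmcRule h P = 0 := by
        by_contra hne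
        have hApos : 0 < |qmcInt h - qmcRule h P| := abs_pos.2 hne
        set c : ℝ := (s+1)/|qmcInt h - qmcRule h P| with hc
        have hcpos : 0 < c := div_pos (by linarith) hApos
        have := herr_ch c (by rw [← ht0', mul_zero]; exact zero_le_one)
        rw [abs_of_pos hcpos, hc, div_mul_cancel₀ _ (ne_of_gt hApos)] at this
        linarith
      rw [hAz, abs_zero]
      positivity
    · -- t > 0
      set c : ℝ := (Real.sqrt t)⁻¹ with hc
      have hst : 0 < Real.sqrt t := Real.sqrt_pos.2 htpos
      have hc2 : c^2 * t = 1 := by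
        rw [hc, inv_pow, Real.sq_sqrt ht0]
        exact inv_mul_cancel₀ (ne_of_gt htpos)
      have := herr_ch c (le_of_eq hc2)
      rw [abs_of_pos (inv_pos.2 hst)] at this
      calc |qmcInt h - qmcRule h P|
          = Real.sqrt t * ((Real.sqrt t)⁻¹ * |qmcInt h - qmcRule h P|) := by
            rw [← mul_assoc, mul_inv_cancel₀ (ne_of_gt hst), one_mul]
        _ ≤ Real.sqrt t * s := mul_le_mul_of_nonneg_left this hst.le
        _ = s * Real.sqrt t := mul_comm _ _
  -- main term
  have hqg : qmcInt g = a 0 := by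
    rw [qmcInt_eq_hCoeff_zero, hcoeff_g, if_pos h0F]
  have hqrg : qmcRule g P = ∑ l ∈ F, a l * wP P l := by
    calc qmcRule g P = (1/(n:ℝ)) * ∑ i, ∑ l ∈ F, a l * Hmulti l (P i) := rfl
      _ = (1/(n:ℝ)) * ∑ l ∈ F, ∑ i, a l * Hmulti l (P i) := by rw [Finset.sum_comm]
      _ = ∑ l ∈ F, a l * ((1/(n:ℝ)) * ∑ i, Hmulti l (P i)) := by
          rw [Finset.mul_sum]
          apply Finset.sum_congr rfl; intro l _
          rw [← Finset.mul_sum]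
          ring
      _ = ∑ l ∈ F, a l * wP P l := rfl
  have hw0 : wP P (0 : Fin d → ℕ) = 1 := by
    unfold wP
    have : ∀ i : Fin n, Hmulti (0 : Fin d → ℕ) (P i) = 1 := fun i => Hmulti_zero _
    rw [Finset.sum_congr rfl (fun i _ => this i), Finset.sum_const, Finset.card_univ,
      Fintype.card_fin]
    have hn' : (n:ℝ) ≠ 0 := Nat.cast_ne_zero.2 hn.ne'
    field_simp
    simp
  have hmain : qmcInt g - qmcRule g P = -∑ l ∈ F.erase 0, a l * wP P l := by
    rw [hqg, hqrg, ← Finset.add_sum_erase F _ h0F, hw0]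
    ring
  -- Cauchy–Schwarz
  set S1 : ℝ := ∑ l ∈ F.erase 0, (pw l)⁻¹ * a l ^ 2 with hS1def
  set S2 : ℝ := ∑ l ∈ F.erase 0, pw l * wP P l ^ 2 with hS2def
  have hS1nn : 0 ≤ S1 := Finset.sum_nonneg fun l _ =>
    mul_nonneg (inv_nonneg.2 (hpwpos l).le) (sq_nonneg _)
  have hS2nn : 0 ≤ S2 := Finset.sum_nonneg fun l _ =>
    mul_nonneg (hpwpos l).le (sq_nonneg _)
  have hEnn : 0 ≤ E := tsum_nonneg fun k => by
    by_cases hk : k = 0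
    · simp [hk]
    · rw [if_neg hk]
      exact mul_nonneg (hpwpos k).le (sq_nonneg _)
  have hCS2 : (∑ l ∈ F.erase 0, a l * wP P l)^2 ≤ S1 * S2 := by
    have hprod : ∀ l, (Real.sqrt ((pw l)⁻¹) * a l) * (Real.sqrt (pw l) * wP P l)
        = a l * wP P l := by
      intro l
      have h1 : Real.sqrt ((pw l)⁻¹) * Real.sqrt (pw l) = 1 := by
        rw [Real.sqrt_inv]
        exact inv_mul_cancel₀ (ne_of_gt (Real.sqrt_pos.2 (hpwpos l)))
      calc (Real.sqrt ((pw l)⁻¹) * a l) * (Real.sqrt (pw l) * wP P l)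
          = (Real.sqrt ((pw l)⁻¹) * Real.sqrt (pw l)) * (a l * wP P l) := by ring
        _ = a l * wP P l := by rw [h1, one_mul]
    have hsq1 : ∀ l, (Real.sqrt ((pw l)⁻¹) * a l)^2 = (pw l)⁻¹ * a l^2 := by
      intro l; rw [mul_pow, Real.sq_sqrt (inv_nonneg.2 (hpwpos l).le)]
    have hsq2 : ∀ l, (Real.sqrt (pw l) * wP P l)^2 = pw l * wP P l^2 := by
      intro l; rw [mul_pow, Real.sq_sqrt (hpwpos l).le]
    calc (∑ l ∈ F.erase 0, a l * wP P l)^2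
        = (∑ l ∈ F.erase 0, (Real.sqrt ((pw l)⁻¹) * a l) * (Real.sqrt (pw l) * wP P l))^2 := by
          rw [Finset.sum_congr rfl (fun l _ => (hprod l))]
      _ ≤ (∑ l ∈ F.erase 0, (Real.sqrt ((pw l)⁻¹) * a l)^2)
          * (∑ l ∈ F.erase 0, (Real.sqrt (pw l) * wP P l)^2) :=
          Finset.sum_mul_sq_le_sq_mul_sq _ _ _
      _ = S1 * S2 := by
          rw [Finset.sum_congr rfl (fun l _ => hsq1 l), Finset.sum_congr rfl (fun l _ => hsq2 l)]
  have hS1le : S1 ≤ 1 := by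
    have h1 : S1 ≤ ∑' k : Fin d → ℕ, (pw k)⁻¹ * hCoeff f k ^ 2 :=
      Summable.sum_le_tsum _ (fun k _ => mul_nonneg (inv_nonneg.2 (hpwpos k).le) (sq_nonneg _)) hfsum
    exact le_trans h1 hnorm
  have hS2le : S2 ≤ E := by
    have heq : S2 = ∑ l ∈ F.erase 0, (if l = 0 then 0 else pw l * wP P l^2) := by
      apply Finset.sum_congr rfl
      intro l hl
      rw [if_neg (Finset.mem_erase.1 hl).1]
    rw [heq, hE]
    apply Summable.sum_le_tsum _ (fun k _ => ?_) hsum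
    by_cases hk : k = 0
    · simp [hk]
    · rw [if_neg hk]
      exact mul_nonneg (hpwpos k).le (sq_nonneg _)
  have hCS : |∑ l ∈ F.erase 0, a l * wP P l| ≤ Real.sqrt E := by
    rw [← Real.sqrt_sq_eq_abs]
    apply Real.sqrt_le_sqrt
    calc (∑ l ∈ F.erase 0, a l * wP P l)^2 ≤ S1 * S2 := hCS2
      _ ≤ 1 * E := mul_le_mul hS1le hS2le hS2nn zero_le_one
      _ = E := one_mul E
  -- final assembly
  have hdecomp : qmcInt f - qmcRule f P
      = (qmcInt g - qmcRule g P) + (qmcInt h - qmcRule h P) := by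
    have h1 : qmcInt h = qmcInt f - qmcInt g :=
      qmcInt_sub (integrable_f_gauss hfc hfsq) (integrable_f_gauss hgc hgsq)
    have h2 : qmcRule h P = qmcRule f P - qmcRule g P := qmcRule_sub f g P
    rw [h1, h2]
    ring
  calc |qmcInt f - qmcRule f P|
      ≤ |qmcInt g - qmcRule g P| + |qmcInt h - qmcRule h P| := by
        rw [hdecomp]; exact abs_add_le _ _
    _ ≤ Real.sqrt E + s * Real.sqrt t := by
        apply add_le_add _ hA
        rw [hmain, abs_neg]
        exact hCS
    _ = _ := rfl

end Aux13

namespace Aux13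

lemma wce_le_sqrt {d n : ℕ} (hn : 0 < n) (αd γd : Fin d → ℝ) (hγ : ∀ j, 0 < γd j)
    (P : Fin n → Fin d → ℝ)
    (hsum : Summable fun k : Fin d → ℕ =>
      if k = 0 then 0 else pweights αd γd k * wP P k ^ 2) :
    wce d n (pweights αd γd) P
      ≤ Real.sqrt (∑' k : Fin d → ℕ, if k = 0 then 0 else pweights αd γd k * wP P k ^ 2) := by
  set pw := pweights αd γd with hpw
  by_cases hB : BddAbove (errSet d n pw P)
  · set s := sSup (errSet d n pw P) with hs
    have hub : ∀ e ∈ errSet d n pw P, e ≤ s := fun e he => le_csSup hB he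
    rw [wce_eq]
    apply Real.sSup_le _ (Real.sqrt_nonneg _)
    rintro e ⟨f, ⟨hfc, hfsq, hfsum⟩, hnorm, rfl⟩
    -- limit over finsets
    set u : (Fin d → ℕ) → ℝ := fun k => (pw k)⁻¹ * hCoeff f k ^ 2 with hu
    have htail_eq : ∀ G : Finset (Fin d → ℕ),
        (∑' k : Fin d → ℕ, if k ∈ G then 0 else u k)
          = ∑' k : {x : Fin d → ℕ // x ∉ G}, u k := by
      intro G
      have h1 := tsum_subtype {x : Fin d → ℕ | x ∉ G} u
      have h2 : (∑' k : {x : Fin d → ℕ // x ∉ G}, u k)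
          = ∑' (x : ↑{x : Fin d → ℕ | x ∉ G}), u ↑x := rfl
      rw [h2, h1]
      apply tsum_congr
      intro k
      by_cases hk : k ∈ G
      · simp [Set.indicator, hk]
      · simp [Set.indicator, hk]
    have htail0 : Tendsto (fun G : Finset (Fin d → ℕ) =>
        (∑' k : Fin d → ℕ, if k ∈ G then 0 else u k)) atTop (nhds 0) := by
      have := tendsto_tsum_compl_atTop_zero u
      apply Tendsto.congr _ this
      intro G
      exact (htail_eq G).symm
    have hins : Tendsto (fun G : Finset (Fin d → ℕ) => insert (0 : Fin d → ℕ) G)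
        atTop atTop := by
      apply Filter.tendsto_atTop_atTop_of_monotone
      · intro A B hAB
        exact Finset.insert_subset_insert _ hAB
      · intro G
        exact ⟨G, Finset.subset_insert _ _⟩
    have htail0' : Tendsto (fun G : Finset (Fin d → ℕ) =>
        (∑' k : Fin d → ℕ, if k ∈ insert (0:Fin d → ℕ) G then 0 else u k)) atTop (nhds 0) :=
      htail0.comp hins
    have hsqrt0 : Tendsto (fun G : Finset (Fin d → ℕ) =>
        Real.sqrt (∑' k : Fin d → ℕ, if k ∈ insert (0:Fin d → ℕ) G then 0 else u k))
        atTop (nhds 0) := by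
      have hcont := (Real.continuous_sqrt.tendsto 0)
      have := hcont.comp htail0'
      simpa [Function.comp_def] using this
    have hR : Tendsto (fun G : Finset (Fin d → ℕ) =>
        Real.sqrt (∑' k : Fin d → ℕ, if k = 0 then 0 else pw k * wP P k ^ 2)
          + s * Real.sqrt (∑' k : Fin d → ℕ, if k ∈ insert (0:Fin d → ℕ) G then 0 else u k))
        atTop (nhds (Real.sqrt (∑' k : Fin d → ℕ, if k = 0 then 0 else pw k * wP P k ^ 2))) := by
      have h1 := (tendsto_const_nhds (x := s)
        (f := atTop (α := Finset (Fin d → ℕ)))).mul hsqrt0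
      have h2 := (tendsto_const_nhds
        (x := Real.sqrt (∑' k : Fin d → ℕ, if k = 0 then 0 else pw k * wP P k ^ 2))
        (f := atTop (α := Finset (Fin d → ℕ)))).add h1
      simpa using h2
    apply ge_of_tendsto hR
    filter_upwards with G
    exact claimA hn αd γd hγ P hsum f hfc hfsq hfsum hnorm s hub
      (insert 0 G) (Finset.mem_insert_self _ _)
  · rw [wce_eq, Real.sSup_of_not_bddAbove hB]
    exact Real.sqrt_nonneg _

end Aux13

namespace Aux13

variable {d n : ℕ}

/-- product gaussian density on the space of point sets -/
def DD (d n : ℕ) : (Fin n → Fin d → ℝ) → ℝ := fun P => ∏ i, gaussD d (P i)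

lemma DD_nonneg (P : Fin n → Fin d → ℝ) : 0 ≤ DD d n P :=
  Finset.prod_nonneg fun i _ => (gaussD_pos _).le

lemma DD_cont : Continuous (DD d n) :=
  continuous_finset_prod _ fun i _ => gaussD_cont.comp (continuous_apply i)

lemma integrable_DD : Integrable (DD d n) :=
  MeasureTheory.Integrable.fintype_prod (𝕜 := ℝ)
    (f := fun (_ : Fin n) (y : Fin d → ℝ) => gaussD d y) (fun _ => integrable_gaussD)

lemma integral_DD : (∫ P : Fin n → Fin d → ℝ, DD d n P) = 1 := by
  unfold DD
  rw [MeasureTheory.integral_fintype_prod_volume_eq_prod (𝕜 := ℝ)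
    (f := fun (_ : Fin n) (y : Fin d → ℝ) => gaussD d y)]
  simp [integral_gaussD]

lemma wP_cont (k : Fin d → ℕ) : Continuous fun P : Fin n → Fin d → ℝ => wP P k := by
  unfold wP
  exact continuous_const.mul
    (continuous_finset_sum _ fun i _ => (Hmulti_cont k).comp (continuous_apply i))

lemma integral_T (i i' : Fin n) (k : Fin d → ℕ) (hk : k ≠ 0) :
    Integrable (fun P : Fin n → Fin d → ℝ => Hmulti k (P i) * Hmulti k (P i') * DD d n P)
    ∧ (∫ P : Fin n → Fin d → ℝ, Hmulti k (P i) * Hmulti k (P i') * DD d n P)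
      = if i = i' then 1 else 0 := by
  classical
  set F : Fin n → (Fin d → ℝ) → ℝ := fun m y =>
    (if m = i then Hmulti k y else 1) * ((if m = i' then Hmulti k y else 1) * gaussD d y)
    with hF
  have hFeq : ∀ P : Fin n → Fin d → ℝ,
      (∏ m, F m (P m)) = Hmulti k (P i) * Hmulti k (P i') * DD d n P := by
    intro P
    rw [hF]
    simp only []
    rw [Finset.prod_mul_distrib, Finset.prod_mul_distrib]
    rw [Finset.prod_ite_eq' Finset.univ i (fun m => Hmulti k (P m)),
      if_pos (Finset.mem_univ i),
      Finset.prod_ite_eq' Finset.univ i' (fun m => Hmulti k (P m)),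
      if_pos (Finset.mem_univ i')]
    unfold DD
    ring
  have hFint : ∀ m, Integrable (F m) := by
    intro m
    rw [hF]
    by_cases hmi : m = i <;> by_cases hmi' : m = i'
    · simp only [if_pos hmi, if_pos hmi']
      apply (integrable_HHgauss k k).congr
      filter_upwards with y
      ring
    · simp only [if_pos hmi, if_neg hmi', one_mul]
      exact integrable_Hgauss k
    · simp only [if_neg hmi, if_pos hmi', one_mul]
      exact integrable_Hgauss k
    · simp only [if_neg hmi, if_neg hmi', one_mul]
      exact integrable_gaussD
  have hTint : Integrable
      (fun P : Fin n → Fin d → ℝ => Hmulti k (P i) * Hmulti k (P i') * DD d n P) := by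
    have := MeasureTheory.Integrable.fintype_prod (𝕜 := ℝ) (f := F) hFint
    apply this.congr
    filter_upwards with P
    exact hFeq P
  refine ⟨hTint, ?_⟩
  have : (fun P : Fin n → Fin d → ℝ => Hmulti k (P i) * Hmulti k (P i') * DD d n P)
      = fun P => ∏ m, F m (P m) := by
    funext P; exact (hFeq P).symm
  rw [this, MeasureTheory.integral_fintype_prod_volume_eq_prod (𝕜 := ℝ) (f := F)]
  by_cases hii : i = i'
  · subst hii
    rw [if_pos rfl]
    apply Finset.prod_eq_one
    intro m _
    rw [hF]
    by_cases hmi : m = i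
    · simp only [if_pos hmi]
      have heq : (fun y : Fin d → ℝ => Hmulti k y * (Hmulti k y * gaussD d y))
          = fun y => Hmulti k y * Hmulti k y * gaussD d y := by funext y; ring
      rw [heq, integral_HHgauss, if_pos rfl]
    · simp only [if_neg hmi, one_mul]
      exact integral_gaussD
  · rw [if_neg hii]
    apply Finset.prod_eq_zero (Finset.mem_univ i)
    rw [hF]
    simp only [eq_self_iff_true, if_true, if_neg hii, one_mul]
    rw [integral_Hgauss, if_neg hk]
lemma integral_wsq (hn : 0 < n) (k : Fin d → ℕ) (hk : k ≠ 0) :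
    Integrable (fun P : Fin n → Fin d → ℝ => wP P k ^ 2 * DD d n P)
    ∧ (∫ P : Fin n → Fin d → ℝ, wP P k ^ 2 * DD d n P) = 1 / n := by
  classical
  have hsplit : ∀ P : Fin n → Fin d → ℝ, wP P k ^ 2 * DD d n P
      = (1/(n:ℝ))^2 * ∑ i : Fin n, ∑ i' : Fin n,
          Hmulti k (P i) * Hmulti k (P i') * DD d n P := by
    intro P
    have h1 : (∑ i, Hmulti k (P i))^2 * DD d n P
        = ∑ i : Fin n, ∑ i' : Fin n, Hmulti k (P i) * Hmulti k (P i') * DD d n P := by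
      rw [sq, Finset.sum_mul_sum, Finset.sum_mul]
      apply Finset.sum_congr rfl; intro i _
      rw [Finset.sum_mul]
    unfold wP
    rw [mul_pow, mul_assoc, h1]
  have hint : Integrable (fun P : Fin n → Fin d → ℝ => wP P k ^ 2 * DD d n P) := by
    have h2 : Integrable (fun P : Fin n → Fin d → ℝ =>
        (1/(n:ℝ))^2 * ∑ i : Fin n, ∑ i' : Fin n,
          Hmulti k (P i) * Hmulti k (P i') * DD d n P) := by
      apply Integrable.const_mul
      apply integrable_finset_sum; intro i _
      apply integrable_finset_sum; intro i' _
      exact (integral_T i i' k hk).1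
    apply h2.congr
    filter_upwards with P
    exact (hsplit P).symm
  refine ⟨hint, ?_⟩
  rw [show (fun P : Fin n → Fin d → ℝ => wP P k ^ 2 * DD d n P)
      = fun P => (1/(n:ℝ))^2 * ∑ i : Fin n, ∑ i' : Fin n,
          Hmulti k (P i) * Hmulti k (P i') * DD d n P from by funext P; exact hsplit P]
  rw [integral_const_mul]
  rw [integral_finset_sum _ (fun i _ => integrable_finset_sum _
    (fun i' _ => (integral_T i i' k hk).1))]
  have hval : ∀ i : Fin n, (∫ P : Fin n → Fin d → ℝ,
      ∑ i' : Fin n, Hmulti k (P i) * Hmulti k (P i') * DD d n P) = 1 := by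
    intro i
    rw [integral_finset_sum _ (fun i' _ => (integral_T i i' k hk).1)]
    rw [Finset.sum_congr rfl (fun i' _ => (integral_T i i' k hk).2)]
    simp
  rw [Finset.sum_congr rfl (fun i _ => hval i)]
  rw [Finset.sum_const, Finset.card_univ, Fintype.card_fin]
  have hn' : (n:ℝ) ≠ 0 := Nat.cast_ne_zero.2 hn.ne'
  field_simp
  ring

end Aux13

namespace Aux13

variable {d n : ℕ}

lemma exists_good_P (hn : 0 < n) (αd γd : Fin d → ℝ) (hγ : ∀ j, 0 < γd j)
    (hpwsum : Summable (pweights αd γd))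
    {ε : ℝ} (hε : 0 < ε)
    (hC : (∑' k : Fin d → ℕ, if k = 0 then 0 else pweights αd γd k) < ε^2 * n) :
    ∃ P : Fin n → Fin d → ℝ,
      (Summable fun k : Fin d → ℕ => if k = 0 then 0 else pweights αd γd k * wP P k ^ 2)
      ∧ (∑' k : Fin d → ℕ, if k = 0 then 0 else pweights αd γd k * wP P k ^ 2) ≤ ε^2 := by
  classical
  set pw := pweights αd γd with hpwdef
  have hpwpos : ∀ k, 0 < pw k := pweights_pos hγ
  set q : (Fin d → ℕ) → (Fin n → Fin d → ℝ) → ℝ :=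
    fun k P => if k = 0 then 0 else pw k * wP P k ^ 2 with hqdef
  have hq_nonneg : ∀ k P, 0 ≤ q k P := by
    intro k P
    rw [hqdef]
    by_cases hk : k = 0
    · simp [hk]
    · simp only [if_neg hk]
      exact mul_nonneg (hpwpos k).le (sq_nonneg _)
  have hq_cont : ∀ k, Continuous (q k) := by
    intro k
    rw [hqdef]
    by_cases hk : k = 0
    · simp only [if_pos hk]
      exact continuous_const
    · simp only [if_neg hk]
      exact continuous_const.mul ((wP_cont k).pow 2)
  have hmeas : ∀ k, Measurable fun P : Fin n → Fin d → ℝ =>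
      ENNReal.ofReal (q k P * DD d n P) :=
    fun k => ((hq_cont k).mul DD_cont).measurable.ennreal_ofReal
  -- value of each lintegral
  set v : (Fin d → ℕ) → ℝ := fun k => if k = 0 then 0 else pw k * (1/n) with hvdef
  have hv_nonneg : ∀ k, 0 ≤ v k := by
    intro k
    rw [hvdef]
    by_cases hk : k = 0
    · simp [hk]
    · simp only [if_neg hk]
      apply mul_nonneg (hpwpos k).le
      positivity
  have hv_summable : Summable v := by
    have h1 : Summable fun k : Fin d → ℕ => (if k = 0 then 0 else pw k) * (1/(n:ℝ)) := by
      apply Summable.mul_right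
      apply Summable.of_nonneg_of_le _ _ hpwsum
      · intro k
        by_cases hk : k = 0
        · simp [hk]
        · simp only [if_neg hk]; exact (hpwpos k).le
      · intro k
        by_cases hk : k = 0
        · simp only [if_pos hk]; exact (hpwpos k).le
        · simp [hk]
    apply h1.congr
    intro k
    rw [hvdef]
    by_cases hk : k = 0 <;> simp [hk]
  have hqD_int : ∀ k, Integrable (fun P : Fin n → Fin d → ℝ => q k P * DD d n P)
      ∧ (∫ P : Fin n → Fin d → ℝ, q k P * DD d n P) = v k := by
    intro k
    by_cases hk : k = 0
    · constructor
      · have : (fun P : Fin n → Fin d → ℝ => q k P * DD d n P) = fun _ => 0 := by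
          funext P; rw [hqdef]; simp [hk]
        rw [this]; exact integrable_zero _ _ _
      · have : (fun P : Fin n → Fin d → ℝ => q k P * DD d n P) = fun _ => 0 := by
          funext P; rw [hqdef]; simp [hk]
        rw [this, hvdef]; simp [hk]
    · have heq : (fun P : Fin n → Fin d → ℝ => q k P * DD d n P)
          = fun P => pw k * (wP P k ^ 2 * DD d n P) := by
        funext P; rw [hqdef]; simp only [if_neg hk]; ring
      constructor
      · rw [heq]; exact ((integral_wsq hn k hk).1).const_mul _
      · rw [heq, integral_const_mul, (integral_wsq hn k hk).2]
        simp only [hvdef, if_neg hk]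
  -- the total lintegral
  have hL : (∫⁻ P : Fin n → Fin d → ℝ,
      (∑' k : Fin d → ℕ, ENNReal.ofReal (q k P)) * ENNReal.ofReal (DD d n P))
      = ENNReal.ofReal ((∑' k : Fin d → ℕ, if k = 0 then 0 else pw k) * (1/n)) := by
    have hstep1 : ∀ P : Fin n → Fin d → ℝ,
        (∑' k : Fin d → ℕ, ENNReal.ofReal (q k P)) * ENNReal.ofReal (DD d n P)
          = ∑' k : Fin d → ℕ, ENNReal.ofReal (q k P * DD d n P) := by
      intro P
      rw [← ENNReal.tsum_mul_right]
      apply tsum_congr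
      intro k
      rw [ENNReal.ofReal_mul (hq_nonneg k P)]
    rw [lintegral_congr hstep1]
    rw [lintegral_tsum (fun k => (hmeas k).aemeasurable)]
    have hstep2 : ∀ k, (∫⁻ P : Fin n → Fin d → ℝ, ENNReal.ofReal (q k P * DD d n P))
        = ENNReal.ofReal (v k) := by
      intro k
      rw [← ofReal_integral_eq_lintegral_ofReal (hqD_int k).1]
      · rw [(hqD_int k).2]
      · filter_upwards with P
        exact mul_nonneg (hq_nonneg k P) (DD_nonneg P)
    rw [tsum_congr hstep2]
    rw [← ENNReal.ofReal_tsum_of_nonneg hv_nonneg hv_summable]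
    congr 1
    have : ∀ k, v k = (if k = 0 then 0 else pw k) * (1/(n:ℝ)) := by
      intro k
      rw [hvdef]
      by_cases hk : k = 0 <;> simp [hk]
    rw [tsum_congr this, tsum_mul_right]
  -- existence
  by_contra hcon
  push_neg at hcon
  have hbad : ∀ P : Fin n → Fin d → ℝ,
      ENNReal.ofReal (ε^2) < ∑' k : Fin d → ℕ, ENNReal.ofReal (q k P) := by
    intro P
    by_contra hP
    push_neg at hP
    have hne : (∑' k : Fin d → ℕ, ENNReal.ofReal (q k P)) ≠ ⊤ :=
      (lt_of_le_of_lt hP ENNReal.ofReal_lt_top).ne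
    have hsummable : Summable (fun k => q k P) := by
      have := ENNReal.summable_toReal hne
      apply this.congr
      intro k
      rw [ENNReal.toReal_ofReal (hq_nonneg k P)]
    have htsum_le : (∑' k : Fin d → ℕ, q k P) ≤ ε^2 := by
      have h1 : (∑' k : Fin d → ℕ, q k P)
          = (∑' k : Fin d → ℕ, ENNReal.ofReal (q k P)).toReal := by
        rw [ENNReal.tsum_toReal_eq (fun k => ENNReal.ofReal_ne_top)]
        apply tsum_congr
        intro k
        rw [ENNReal.toReal_ofReal (hq_nonneg k P)]
      rw [h1]
      calc (∑' k : Fin d → ℕ, ENNReal.ofReal (q k P)).toReal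
          ≤ (ENNReal.ofReal (ε^2)).toReal := ENNReal.toReal_mono ENNReal.ofReal_ne_top hP
        _ = ε^2 := ENNReal.toReal_ofReal (sq_nonneg ε)
    exact absurd htsum_le (not_le.2 (hcon P hsummable))
  -- integrate the lower bound
  have hlow : ENNReal.ofReal (ε^2)
      ≤ ∫⁻ P : Fin n → Fin d → ℝ,
        (∑' k : Fin d → ℕ, ENNReal.ofReal (q k P)) * ENNReal.ofReal (DD d n P) := by
    have h1 : ∀ P : Fin n → Fin d → ℝ,
        ENNReal.ofReal (ε^2) * ENNReal.ofReal (DD d n P)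
          ≤ (∑' k : Fin d → ℕ, ENNReal.ofReal (q k P)) * ENNReal.ofReal (DD d n P) :=
      fun P => mul_le_mul_left (hbad P).le _
    calc ENNReal.ofReal (ε^2)
        = ENNReal.ofReal (ε^2) * ENNReal.ofReal (∫ P : Fin n → Fin d → ℝ, DD d n P) := by
          rw [integral_DD, ENNReal.ofReal_one, mul_one]
      _ = ENNReal.ofReal (ε^2) * ∫⁻ P : Fin n → Fin d → ℝ, ENNReal.ofReal (DD d n P) := by
          rw [ofReal_integral_eq_lintegral_ofReal integrable_DD
            (by filter_upwards with P; exact DD_nonneg P)]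
      _ = ∫⁻ P : Fin n → Fin d → ℝ, ENNReal.ofReal (ε^2) * ENNReal.ofReal (DD d n P) := by
          rw [lintegral_const_mul _ (DD_cont.measurable.ennreal_ofReal)]
      _ ≤ _ := lintegral_mono h1
  rw [hL] at hlow
  have hfin : ε^2 ≤ (∑' k : Fin d → ℕ, if k = 0 then 0 else pw k) * (1/n) := by
    have hnn : (0:ℝ) ≤ (∑' k : Fin d → ℕ, if k = 0 then 0 else pw k) * (1/n) := by
      apply mul_nonneg _ (by positivity)
      apply tsum_nonneg
      intro k
      by_cases hk : k = 0
      · simp [hk]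
      · simp only [if_neg hk]; exact (hpwpos k).le
    exact (ENNReal.ofReal_le_ofReal_iff hnn).1 hlow
  have hn' : (0:ℝ) < n := by exact_mod_cast hn
  have := mul_le_mul_of_nonneg_right hfin hn'.le
  rw [mul_assoc, one_div, inv_mul_cancel₀ hn'.ne', mul_one] at this
  linarith

end Aux13

namespace Aux13

lemma summable_pweight {a α γ : ℝ} (ha : 1 < a) (hαa : a ≤ α) (hγ : 0 < γ) :
    Summable (pweight α γ)
    ∧ (∑' m : ℕ, pweight α γ m) ≤ 1 + γ * ∑' m : ℕ, (m:ℝ) ^ (-a) := by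
  have hZs : Summable (fun m : ℕ => (m:ℝ) ^ (-a)) := Real.summable_nat_rpow.2 (by linarith)
  have hbound : ∀ m : ℕ, pweight α γ m ≤ (if m = 0 then 1 else 0) + γ * (m:ℝ) ^ (-a) := by
    intro m
    unfold pweight
    by_cases hm : m = 0
    · subst hm
      simp only [if_pos rfl]
      rw [Nat.cast_zero, Real.zero_rpow (by linarith : -a ≠ 0)]
      norm_num
    · simp only [if_neg hm, zero_add]
      apply mul_le_mul_of_nonneg_left _ hγ.le
      apply Real.rpow_le_rpow_of_exponent_le _ (by linarith : -α ≤ -a)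
      exact_mod_cast Nat.one_le_iff_ne_zero.2 hm
  have hite : Summable (fun m : ℕ => if m = 0 then (1:ℝ) else 0) := by
    apply summable_of_ne_finset_zero (s := {0})
    intro m hm
    rw [if_neg (by simpa using hm)]
  have hRHS : Summable (fun m : ℕ => (if m = 0 then (1:ℝ) else 0) + γ * (m:ℝ) ^ (-a)) :=
    hite.add (hZs.mul_left γ)
  have hpos : ∀ m, 0 ≤ pweight α γ m := fun m => (pweight_pos hγ m).le
  have hsummable : Summable (pweight α γ) := Summable.of_nonneg_of_le hpos hbound hRHS
  refine ⟨hsummable, ?_⟩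
  calc (∑' m : ℕ, pweight α γ m)
      ≤ ∑' m : ℕ, ((if m = 0 then (1:ℝ) else 0) + γ * (m:ℝ) ^ (-a)) :=
        Summable.tsum_le_tsum hbound hsummable hRHS
    _ = (∑' m : ℕ, if m = 0 then (1:ℝ) else 0) + γ * ∑' m : ℕ, (m:ℝ) ^ (-a) := by
        rw [Summable.tsum_add hite (hZs.mul_left γ), tsum_mul_left]
    _ = 1 + γ * ∑' m : ℕ, (m:ℝ) ^ (-a) := by
        rw [tsum_ite_eq (0:ℕ) (fun _ => (1:ℝ))]

lemma tsum_pi_ennreal : ∀ (d : ℕ) (W : Fin d → ℕ → ENNReal),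
    (∑' k : Fin d → ℕ, ∏ j, W j (k j)) = ∏ j, ∑' m : ℕ, W j m := by
  intro d
  induction d with
  | zero =>
    intro W
    haveI : Unique (Fin 0 → ℕ) :=
      ⟨⟨fun i => i.elim0⟩, fun f => funext fun i => i.elim0⟩
    rw [tsum_eq_single (default : Fin 0 → ℕ)
      (fun b hb => absurd (Subsingleton.elim b default) hb)]
    simp
  | succ d ih =>
    intro W
    set e : (ℕ × (Fin d → ℕ)) ≃ (Fin (d+1) → ℕ) := Fin.consEquiv (fun _ => ℕ) with he
    rw [← e.tsum_eq (f := fun k : Fin (d+1) → ℕ => ∏ j, W j (k j))]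
    have hterm : ∀ p : ℕ × (Fin d → ℕ),
        (∏ j : Fin (d+1), W j ((e p) j))
          = W 0 p.1 * ∏ j : Fin d, W j.succ (p.2 j) := by
      intro p
      rw [Fin.prod_univ_succ, he]
      simp [Fin.consEquiv]
    rw [tsum_congr hterm, ENNReal.tsum_prod']
    have hinner : ∀ m : ℕ, (∑' k : Fin d → ℕ, W 0 m * ∏ j : Fin d, W j.succ (k j))
        = W 0 m * ∏ j : Fin d, ∑' l : ℕ, W j.succ l := by
      intro m
      rw [ENNReal.tsum_mul_left, ih (fun j => W j.succ)]
    rw [tsum_congr hinner, ENNReal.tsum_mul_right, Fin.prod_univ_succ]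

lemma pweights_summable_tsum {d : ℕ} (αd γd : Fin d → ℝ) (hγ : ∀ j, 0 < γd j)
    (hs : ∀ j, Summable (pweight (αd j) (γd j))) :
    Summable (pweights αd γd)
    ∧ (∑' k : Fin d → ℕ, pweights αd γd k)
        = ∏ j, ∑' m : ℕ, pweight (αd j) (γd j) m := by
  classical
  set W : Fin d → ℕ → ENNReal :=
    fun j m => ENNReal.ofReal (pweight (αd j) (γd j) m) with hW
  have h1 : ∀ k : Fin d → ℕ, ENNReal.ofReal (pweights αd γd k) = ∏ j, W j (k j) := by
    intro k
    rw [pweights, ENNReal.ofReal_prod_of_nonneg (fun j _ => (pweight_pos (hγ j) _).le)]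
  have h3 : ∀ j, (∑' m : ℕ, W j m)
      = ENNReal.ofReal (∑' m : ℕ, pweight (αd j) (γd j) m) := by
    intro j
    rw [ENNReal.ofReal_tsum_of_nonneg (fun m => (pweight_pos (hγ j) m).le) (hs j)]
  have h2 : (∑' k : Fin d → ℕ, ENNReal.ofReal (pweights αd γd k))
      = ENNReal.ofReal (∏ j, ∑' m : ℕ, pweight (αd j) (γd j) m) := by
    rw [tsum_congr h1, tsum_pi_ennreal d W, Finset.prod_congr rfl (fun j _ => h3 j),
      ← ENNReal.ofReal_prod_of_nonneg]
    intro j _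
    exact tsum_nonneg fun m => (pweight_pos (hγ j) m).le
  have hne : (∑' k : Fin d → ℕ, ENNReal.ofReal (pweights αd γd k)) ≠ ⊤ := by
    rw [h2]; exact ENNReal.ofReal_ne_top
  have hsummable : Summable (pweights αd γd) := by
    have := ENNReal.summable_toReal hne
    apply this.congr
    intro k
    rw [ENNReal.toReal_ofReal (pweights_pos hγ k).le]
  refine ⟨hsummable, ?_⟩
  have h4 : (∑' k : Fin d → ℕ, pweights αd γd k)
      = (∑' k : Fin d → ℕ, ENNReal.ofReal (pweights αd γd k)).toReal := by
    rw [ENNReal.tsum_toReal_eq (fun k => ENNReal.ofReal_ne_top)]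
    apply tsum_congr
    intro k
    rw [ENNReal.toReal_ofReal (pweights_pos hγ k).le]
  rw [h4, h2, ENNReal.toReal_ofReal]
  exact Finset.prod_nonneg fun j _ =>
    tsum_nonneg fun m => (pweight_pos (hγ j) m).le

lemma Cd_le {d : ℕ} {a : ℝ} (ha : 1 < a) (αd γd : Fin d → ℝ)
    (hγ : ∀ j, 0 < γd j) (hα : ∀ j, a ≤ αd j) :
    Summable (pweights αd γd)
    ∧ (∑' k : Fin d → ℕ, if k = 0 then 0 else pweights αd γd k)
        ≤ Real.exp ((∑' m : ℕ, (m:ℝ) ^ (-a)) * ∑ j, γd j) := by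
  classical
  set Z : ℝ := ∑' m : ℕ, (m:ℝ) ^ (-a) with hZ
  have hZ0 : 0 ≤ Z := tsum_nonneg fun m => Real.rpow_nonneg (Nat.cast_nonneg m) _
  have hper : ∀ j, Summable (pweight (αd j) (γd j))
      ∧ (∑' m : ℕ, pweight (αd j) (γd j) m) ≤ 1 + γd j * Z :=
    fun j => summable_pweight ha (hα j) (hγ j)
  obtain ⟨hsummable, htsum⟩ := pweights_summable_tsum αd γd hγ (fun j => (hper j).1)
  refine ⟨hsummable, ?_⟩
  have hsplit := Summable.tsum_eq_add_tsum_ite hsummable (0 : Fin d → ℕ)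
  rw [pweights_zero] at hsplit
  have hTle : (∏ j, ∑' m : ℕ, pweight (αd j) (γd j) m) ≤ ∏ j, (1 + γd j * Z) := by
    apply Finset.prod_le_prod
    · intro j _
      exact tsum_nonneg fun m => (pweight_pos (hγ j) m).le
    · intro j _
      exact (hper j).2
  have hexp : (∏ j, ((1:ℝ) + γd j * Z)) ≤ Real.exp (Z * ∑ j, γd j) := by
    calc (∏ j, ((1:ℝ) + γd j * Z)) ≤ ∏ j, Real.exp (γd j * Z) := by
          apply Finset.prod_le_prod
          · intro j _
            have := (hγ j).le
            positivity
          · intro j _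
            have := Real.add_one_le_exp (γd j * Z)
            linarith
      _ = Real.exp (∑ j, γd j * Z) := by rw [Real.exp_sum]
      _ = Real.exp (Z * ∑ j, γd j) := by rw [← Finset.sum_mul]; ring_nf
  have : (∑' k : Fin d → ℕ, if k = 0 then 0 else pweights αd γd k)
      = (∑' k : Fin d → ℕ, pweights αd γd k) - 1 := by
    linarith [hsplit]
  rw [this, htsum]
  have := le_trans hTle hexp
  linarith

end Aux13

namespace Aux13

lemma nmin_le {d : ℕ} (αd γd : Fin d → ℝ) (hγ : ∀ j, 0 < γd j)
    (hpwsum : Summable (pweights αd γd))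
    (B : ℝ) (hB0 : 0 ≤ B)
    (hB : (∑' k : Fin d → ℕ, if k = 0 then 0 else pweights αd γd k) ≤ B)
    {ε : ℝ} (hε0 : 0 < ε) (hε1 : ε < 1) :
    ((nmin d (pweights αd γd) ε : ℝ)) ≤ (B + 1) * ε⁻¹^2 := by
  set n : ℕ := ⌊B / ε^2⌋₊ + 1 with hndef
  have hn : 0 < n := Nat.succ_pos _
  have hlt : B / ε^2 < n := by
    rw [hndef]
    push_cast
    exact Nat.lt_floor_add_one _
  have hε2 : (0:ℝ) < ε^2 := by positivity
  have hBn : B < ε^2 * n := by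
    rw [div_lt_iff₀ hε2] at hlt
    linarith
  have hCd : (∑' k : Fin d → ℕ, if k = 0 then 0 else pweights αd γd k) < ε^2 * n :=
    lt_of_le_of_lt hB hBn
  obtain ⟨P, hPs, hPle⟩ := exists_good_P hn αd γd hγ hpwsum hε0 hCd
  have hwce : wce d n (pweights αd γd) P ≤ ε := by
    calc wce d n (pweights αd γd) P
        ≤ Real.sqrt (∑' k : Fin d → ℕ,
            if k = 0 then 0 else pweights αd γd k * wP P k ^ 2) :=
          wce_le_sqrt hn αd γd hγ P hPs
      _ ≤ Real.sqrt (ε^2) := Real.sqrt_le_sqrt hPle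
      _ = ε := Real.sqrt_sq hε0.le
  have hmem : n ∈ {m : ℕ | 0 < m ∧ ∃ P : Fin m → Fin d → ℝ,
      wce d m (pweights αd γd) P ≤ ε} := ⟨hn, P, hwce⟩
  have h1 : nmin d (pweights αd γd) ε ≤ n := Nat.sInf_le hmem
  have h2 : (n:ℝ) ≤ B / ε^2 + 1 := by
    rw [hndef]
    push_cast
    have := Nat.floor_le (show (0:ℝ) ≤ B/ε^2 by positivity)
    linarith
  have hinv : 1 ≤ ε⁻¹^2 := by
    have h1' : 1 ≤ ε⁻¹ := by
      rw [le_inv_comm₀ one_pos hε0]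
      simpa using hε1.le
    nlinarith
  have h3 : B / ε^2 + 1 ≤ (B+1) * ε⁻¹^2 := by
    have hdiv : B/ε^2 = B * ε⁻¹^2 := by
      rw [div_eq_mul_inv, inv_pow]
    rw [hdiv]
    nlinarith
  calc ((nmin d (pweights αd γd) ε : ℝ)) ≤ (n:ℝ) := by exact_mod_cast h1
    _ ≤ B / ε^2 + 1 := h2
    _ ≤ (B+1) * ε⁻¹^2 := h3

end Aux13


open Aux13 in
/-- sufficient conditions for (strong) polynomial tractability of multivariate
integration in the Hermite spaces `𝓗_{𝐩_{𝛂,𝛄}}` with polynomially decaying coefficients. -/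
theorem stmt13 (γ α : ℕ → ℝ)
    (hγpos : ∀ j, 0 < γ j) (hγmono : ∀ i j, i ≤ j → γ j ≤ γ i)
    (hα : ∃ a : ℝ, 1 < a ∧ ∀ j, a ≤ α j) :
    (Summable γ →
      ∃ c : ℝ, ∀ d : ℕ, 0 < d → ∀ ε : ℝ, ε ∈ Set.Ioo (0 : ℝ) 1 →
        ((nmin d (pweights (fun j : Fin d => α j) (fun j : Fin d => γ j)) ε : ℝ)
          ≤ c * ε⁻¹ ^ 2)) ∧
    ((∃ A : ℝ, ∀ᶠ d : ℕ in atTop, (∑ j ∈ Finset.range d, γ j) ≤ A * Real.log d) →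
      ∃ c q : ℝ, ∀ d : ℕ, 0 < d → ∀ ε : ℝ, ε ∈ Set.Ioo (0 : ℝ) 1 →
        ((nmin d (pweights (fun j : Fin d => α j) (fun j : Fin d => γ j)) ε : ℝ)
          ≤ c * (d : ℝ) ^ q * ε⁻¹ ^ 2)) := by
  obtain ⟨a, ha1, haj⟩ := hα
  set Z : ℝ := ∑' m : ℕ, (m:ℝ) ^ (-a) with hZdef
  have hZ0 : 0 ≤ Z := tsum_nonneg fun m => Real.rpow_nonneg (Nat.cast_nonneg m) _
  constructor
  · -- strong polynomial tractability
    intro hγsum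
    set Γ : ℝ := ∑' j, γ j with hΓdef
    refine ⟨Real.exp (Z * Γ) + 1, ?_⟩
    intro d hd ε hε
    set αd : Fin d → ℝ := fun j => α j
    set γd : Fin d → ℝ := fun j => γ j
    have hγd : ∀ j : Fin d, 0 < γd j := fun j => hγpos j
    have hαd : ∀ j : Fin d, a ≤ αd j := fun j => haj j
    obtain ⟨hsummable, hCd⟩ := Cd_le ha1 αd γd hγd hαd
    have hsum_le : (∑ j : Fin d, γd j) ≤ Γ := by
      have h1 : (∑ j : Fin d, γd j) = ∑ j ∈ Finset.range d, γ j :=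
        Fin.sum_univ_eq_sum_range (fun j => γ j) d
      rw [h1, hΓdef]
      exact Summable.sum_le_tsum _ (fun j _ => (hγpos j).le) hγsum
    have hB : (∑' k : Fin d → ℕ, if k = 0 then 0 else pweights αd γd k)
        ≤ Real.exp (Z * Γ) := by
      apply le_trans hCd
      apply Real.exp_le_exp.2
      rw [hZdef]
      exact mul_le_mul_of_nonneg_left hsum_le hZ0
    exact nmin_le αd γd hγd hsummable _ (Real.exp_pos _).le hB hε.1 hε.2
  · -- polynomial tractability
    rintro ⟨A, hA⟩
    obtain ⟨D, hD⟩ := eventually_atTop.1 hA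
    set S0 : ℝ := ∑ j ∈ Finset.range D, γ j with hS0def
    have hS00 : 0 ≤ S0 := Finset.sum_nonneg fun j _ => (hγpos j).le
    set qq : ℝ := Z * max A 0 with hqqdef
    have hqq0 : 0 ≤ qq := mul_nonneg hZ0 (le_max_right _ _)
    refine ⟨Real.exp (Z * S0) + 1, qq, ?_⟩
    intro d hd ε hε
    set αd : Fin d → ℝ := fun j => α j
    set γd : Fin d → ℝ := fun j => γ j
    have hγd : ∀ j : Fin d, 0 < γd j := fun j => hγpos j
    have hαd : ∀ j : Fin d, a ≤ αd j := fun j => haj j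
    obtain ⟨hsummable, hCd⟩ := Cd_le ha1 αd γd hγd hαd
    have hd1 : (1:ℝ) ≤ d := by exact_mod_cast hd
    have hdpos : (0:ℝ) < d := by linarith
    have hdq1 : 1 ≤ (d:ℝ) ^ qq := by
      rw [Real.rpow_def_of_pos hdpos]
      exact Real.one_le_exp (mul_nonneg (Real.log_nonneg hd1) hqq0)
    have hsumd : (∑ j : Fin d, γd j) = ∑ j ∈ Finset.range d, γ j :=
      Fin.sum_univ_eq_sum_range (fun j => γ j) d
    set B : ℝ := max (Real.exp (Z * S0)) ((d:ℝ) ^ qq) with hBdef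
    have hB0 : 0 ≤ B := le_trans (Real.exp_pos _).le (le_max_left _ _)
    have hB : (∑' k : Fin d → ℕ, if k = 0 then 0 else pweights αd γd k) ≤ B := by
      apply le_trans hCd
      by_cases hdD : D ≤ d
      · have h1 : (∑ j ∈ Finset.range d, γ j) ≤ A * Real.log d := hD d hdD
        have h2 : Z * (∑ j : Fin d, γd j) ≤ qq * Real.log d := by
          rw [hsumd, hqqdef]
          calc Z * (∑ j ∈ Finset.range d, γ j) ≤ Z * (A * Real.log d) :=
                mul_le_mul_of_nonneg_left h1 hZ0
            _ ≤ Z * (max A 0 * Real.log d) := by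
                apply mul_le_mul_of_nonneg_left _ hZ0
                exact mul_le_mul_of_nonneg_right (le_max_left _ _)
                  (Real.log_nonneg hd1)
            _ = Z * max A 0 * Real.log d := by ring
        calc Real.exp (Z * ∑ j : Fin d, γd j) ≤ Real.exp (qq * Real.log d) :=
              Real.exp_le_exp.2 h2
          _ = (d:ℝ) ^ qq := by
              rw [Real.rpow_def_of_pos hdpos]
              ring_nf
          _ ≤ B := le_max_right _ _
      · push_neg at hdD
        have h1 : (∑ j : Fin d, γd j) ≤ S0 := by
          rw [hsumd, hS0def]
          apply Finset.sum_le_sum_of_subset_of_nonneg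
          · exact Finset.range_subset_range.2 hdD.le
          · intro j _ _
            exact (hγpos j).le
        calc Real.exp (Z * ∑ j : Fin d, γd j) ≤ Real.exp (Z * S0) :=
              Real.exp_le_exp.2 (mul_le_mul_of_nonneg_left h1 hZ0)
          _ ≤ B := le_max_left _ _
    have hmain := nmin_le αd γd hγd hsummable B hB0 hB hε.1 hε.2
    apply le_trans hmain
    have hεinv : (0:ℝ) ≤ ε⁻¹^2 := by positivity
    apply mul_le_mul_of_nonneg_right _ hεinv
    have hBle : B ≤ Real.exp (Z * S0) * (d:ℝ) ^ qq := by
      apply max_le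
      · exact le_mul_of_one_le_right (Real.exp_pos _).le hdq1
      · exact le_mul_of_one_le_left (by positivity) (Real.one_le_exp
          (mul_nonneg hZ0 hS00))
    calc B + 1 ≤ Real.exp (Z * S0) * (d:ℝ) ^ qq + (d:ℝ) ^ qq := by linarith
      _ = (Real.exp (Z * S0) + 1) * (d:ℝ) ^ qq := by ring



end
end

section
/- Let U : ℝ^d → ℝ^d be an orthogonal linear transformation, m ∈ ℕ₀, and let H^{(m)} denote the linear span of the multivariate Hermite polynomials of total degree m, H^{(m)} = span{H_𝐤 : 𝐤 ∈ ℕ₀^d, |𝐤| = m}. Then for every multi-index 𝐤 with |𝐤| = m the function x ↦ H_𝐤(Ux) belongs to H^{(m)}; consequently the map f ↦ f ∘ U restricts to a linear bijection of H^{(m)} onto itself that preserves the L²(ℝ^d, φ_d dx) inner product. -/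
open MeasureTheory Real
open Matrix

noncomputable section

/-- `H^{(m)}`, the span of the multivariate Hermite polynomials of total degree `m`. -/
def hermiteSpan (d m : ℕ) : Submodule ℝ ((Fin d → ℝ) → ℝ) :=
  Submodule.span ℝ {g | ∃ k : Fin d → ℕ, (∑ j, k j) = m ∧ g = Hmulti k}



lemma hnorm_hasDerivAt (n : ℕ) (x : ℝ) :
    HasDerivAt (Hnorm n)
      ((Polynomial.aeval x (Polynomial.derivative (Polynomial.hermite n))) / Real.sqrt (Nat.factorial n)) x := by
  unfold Hnorm
  simpa [div_eq_mul_inv] using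
    (Polynomial.hasDerivAt_aeval (q := Polynomial.hermite n) x).mul_const
      ((Real.sqrt (Nat.factorial n) : ℝ)⁻¹)

lemma hnorm_rec (n : ℕ) (x : ℝ) :
    x * Hnorm n x - (Polynomial.aeval x (Polynomial.derivative (Polynomial.hermite n))) / Real.sqrt (Nat.factorial n)
      = Real.sqrt ((n : ℝ) + 1) * Hnorm (n + 1) x := by
  have hfac : Real.sqrt (Nat.factorial (n+1)) = Real.sqrt ((n : ℝ) + 1) * Real.sqrt (Nat.factorial n) := by
    rw [Nat.factorial_succ, Nat.cast_mul, Real.sqrt_mul (by positivity)]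
    norm_num
  have hs : Real.sqrt ((n:ℝ) + 1) ≠ 0 := by positivity
  have hf : Real.sqrt ((Nat.factorial n : ℝ)) ≠ 0 := by
    have := Nat.factorial_pos n
    positivity
  rw [Hnorm, Hnorm, Polynomial.hermite_succ]
  simp only [map_sub, _root_.map_mul, Polynomial.aeval_X, hfac]
  field_simp


variable {d : ℕ}

def Dop (i : Fin d) (f : (Fin d → ℝ) → ℝ) : (Fin d → ℝ) → ℝ :=
  fun x => fderiv ℝ f x (Pi.single i 1)

def Aop (i : Fin d) (f : (Fin d → ℝ) → ℝ) : (Fin d → ℝ) → ℝ :=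
  fun x => x i * f x - Dop i f x

lemma hmulti_hasFDerivAt (k : Fin d → ℕ) (x : Fin d → ℝ) :
    HasFDerivAt (Hmulti k)
      (∑ i, (∏ j ∈ Finset.univ.erase i, Hnorm (k j) (x j)) •
        ((Polynomial.aeval (x i) (Polynomial.derivative (Polynomial.hermite (k i)))
           / Real.sqrt (Nat.factorial (k i))) • (ContinuousLinearMap.proj i : ((Fin d → ℝ) →L[ℝ] ℝ)))) x := by
  have hproj : ∀ i : Fin d, HasFDerivAt (fun v : Fin d → ℝ => v i)
      (ContinuousLinearMap.proj i : (Fin d → ℝ) →L[ℝ] ℝ) x :=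
    fun i => by
      have h := (ContinuousLinearMap.proj (R := ℝ) (φ := fun _ : Fin d => ℝ) i).hasFDerivAt (x := x)
      exact h
  exact HasFDerivAt.finset_prod (u := Finset.univ)
    (fun i _ => by have := (hnorm_hasDerivAt (k i) (x i)).comp_hasFDerivAt x (hproj i); exact this)

lemma differentiable_hmulti (k : Fin d → ℕ) : Differentiable ℝ (Hmulti k) :=
  fun x => (hmulti_hasFDerivAt k x).differentiableAt

lemma Dop_hmulti (k : Fin d → ℕ) (i : Fin d) (x : Fin d → ℝ) :
    Dop i (Hmulti k) x = (Polynomial.aeval (x i) (Polynomial.derivative (Polynomial.hermite (k i)))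
           / Real.sqrt (Nat.factorial (k i))) * ∏ j ∈ Finset.univ.erase i, Hnorm (k j) (x j) := by
  rw [Dop, (hmulti_hasFDerivAt k x).fderiv]
  rw [ContinuousLinearMap.sum_apply]
  rw [Finset.sum_eq_single i]
  · simp [mul_comm]
  · intro b _ hb
    simp [Pi.single_apply, hb.symm]
  · simp

lemma Aop_hmulti (k : Fin d → ℕ) (i : Fin d) :
    Aop i (Hmulti k) = Real.sqrt ((k i : ℝ) + 1) • Hmulti (Function.update k i (k i + 1)) := by
  funext x
  have hsplit : Hmulti k x = Hnorm (k i) (x i) * ∏ j ∈ Finset.univ.erase i, Hnorm (k j) (x j) :=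
    (Finset.mul_prod_erase _ _ (Finset.mem_univ i)).symm
  have hsplit' : Hmulti (Function.update k i (k i + 1)) x
      = Hnorm (k i + 1) (x i) * ∏ j ∈ Finset.univ.erase i, Hnorm (k j) (x j) := by
    rw [Hmulti, ← Finset.mul_prod_erase _ _ (Finset.mem_univ i), Function.update_self]
    congr 1
    refine Finset.prod_congr rfl fun j hj => ?_
    rw [Function.update_of_ne (Finset.ne_of_mem_erase hj)]
  simp only [Aop, Dop_hmulti, Pi.smul_apply, smul_eq_mul, hsplit, hsplit']
  have h := hnorm_rec (k i) (x i)
  linear_combination (∏ j ∈ Finset.univ.erase i, Hnorm (k j) (x j)) * h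


lemma aop_mem (m : ℕ) {f : (Fin d → ℝ) → ℝ} (hf : f ∈ hermiteSpan d m) :
    Differentiable ℝ f ∧ ∀ i, Aop i f ∈ hermiteSpan d (m + 1) := by
  refine Submodule.span_induction ?_ ?_ ?_ ?_ hf
  · rintro g ⟨k, hk, rfl⟩
    refine ⟨differentiable_hmulti k, fun i => ?_⟩
    rw [Aop_hmulti]
    refine Submodule.smul_mem _ _ (Submodule.subset_span ⟨Function.update k i (k i + 1), ?_, rfl⟩)
    rw [Finset.sum_update_of_mem (Finset.mem_univ i), Finset.sdiff_singleton_eq_erase]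
    rw [← Finset.add_sum_erase _ k (Finset.mem_univ i)] at hk
    omega
  · refine ⟨differentiable_const 0, fun i => ?_⟩
    have : Aop i (0 : (Fin d → ℝ) → ℝ) = 0 := by
      funext x
      simp [Aop, Dop]
    rw [this]; exact Submodule.zero_mem _
  · rintro f g hf' hg' ⟨hfd, hfa⟩ ⟨hgd, hga⟩
    refine ⟨fun x => (hfd x).add (hgd x), fun i => ?_⟩
    have : Aop i (f + g) = Aop i f + Aop i g := by
      funext x
      have hadd : fderiv ℝ (f + g) x = fderiv ℝ f x + fderiv ℝ g x :=
        fderiv_add (hfd x) (hgd x)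
      simp [Aop, Dop, hadd]
      ring
    rw [this]; exact Submodule.add_mem _ (hfa i) (hga i)
  · rintro a f hf' ⟨hfd, hfa⟩
    refine ⟨fun x => (hfd x).const_smul a, fun i => ?_⟩
    have : Aop i (a • f) = a • Aop i f := by
      funext x
      have hsm : fderiv ℝ (a • f) x = a • fderiv ℝ f x := fderiv_const_smul (hfd x) a
      simp [Aop, Dop, hsm]
      ring
    rw [this]; exact Submodule.smul_mem _ _ (hfa i)

lemma star_eq_transpose (U : Matrix (Fin d) (Fin d) ℝ) : star U = Uᵀ := by
  ext i j; simp [Matrix.star_apply]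

lemma Dop_comp (U : Matrix (Fin d) (Fin d) ℝ) {f : (Fin d → ℝ) → ℝ}
    (hf : Differentiable ℝ f) (j : Fin d) (x : Fin d → ℝ) :
    Dop j (fun y => f (U.mulVec y)) x = ∑ i, U i j * Dop i f (U.mulVec x) := by
  classical
  set L : (Fin d → ℝ) →L[ℝ] (Fin d → ℝ) := LinearMap.toContinuousLinearMap (Matrix.mulVecLin U)
    with hLdef
  have hL : ∀ v, L v = U.mulVec v := fun v => rfl
  have hcomp : HasFDerivAt (fun y => f (U.mulVec y)) ((fderiv ℝ f (U.mulVec x)).comp L) x :=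
    (hf (U.mulVec x)).hasFDerivAt.comp x L.hasFDerivAt
  rw [Dop, hcomp.fderiv, ContinuousLinearMap.comp_apply]
  have hv : L (Pi.single j 1) = ∑ i, (U i j) • Pi.single (M := fun _ : Fin d => ℝ) i (1:ℝ) := by
    rw [hL, Matrix.mulVec_single]
    funext i'
    simp [Finset.sum_apply, Pi.single_apply]
  rw [hv, map_sum]
  refine Finset.sum_congr rfl fun i _ => ?_
  rw [_root_.map_smul]
  simp [Dop]

lemma Aop_comp {U : Matrix (Fin d) (Fin d) ℝ} (hU : U ∈ Matrix.orthogonalGroup (Fin d) ℝ)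
    {f : (Fin d → ℝ) → ℝ} (hf : Differentiable ℝ f) (i : Fin d) (x : Fin d → ℝ) :
    Aop i f (U.mulVec x) = ∑ j, U i j * Aop j (fun y => f (U.mulVec y)) x := by
  have h1 : U * Uᵀ = 1 := by
    have := (Matrix.mem_orthogonalGroup_iff (Fin d) ℝ).mp hU; exact this
  simp only [Aop, mul_sub]
  rw [Finset.sum_sub_distrib]
  congr 1
  · have hmv : (U.mulVec x) i = ∑ j, U i j * x j := by
      simp [Matrix.mulVec, dotProduct]
    rw [hmv, Finset.sum_mul]
    exact Finset.sum_congr rfl fun j _ => by ring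
  · have hD := fun j => Dop_comp U hf j x
    simp_rw [hD, Finset.mul_sum]
    rw [Finset.sum_comm]
    have hc : ∀ i', ∑ j, U i j * (U i' j * Dop i' f (U.mulVec x))
        = ((U * Uᵀ) i i') * Dop i' f (U.mulVec x) := by
      intro i'
      rw [Matrix.mul_apply, Finset.sum_mul]
      exact Finset.sum_congr rfl fun j _ => by simp [Matrix.transpose_apply]; ring
    simp_rw [hc, h1, Matrix.one_apply]
    simp

lemma key {U : Matrix (Fin d) (Fin d) ℝ} (hU : U ∈ Matrix.orthogonalGroup (Fin d) ℝ) :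
    ∀ m (k : Fin d → ℕ), (∑ j, k j) = m → (fun x => Hmulti k (U.mulVec x)) ∈ hermiteSpan d m := by
  intro m
  induction m with
  | zero =>
    intro k hk
    have hk0 : ∀ j, k j = 0 := by
      intro j
      exact Finset.sum_eq_zero_iff.mp hk j (Finset.mem_univ j)
    have hone : ∀ y : Fin d → ℝ, Hmulti k y = 1 := by
      intro y
      simp [Hmulti, hk0, Hnorm, Polynomial.hermite_zero]
    have : (fun x => Hmulti k (U.mulVec x)) = Hmulti k := by
      funext x; rw [hone, hone]
    rw [this]
    exact Submodule.subset_span ⟨k, hk, rfl⟩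
  | succ m ih =>
    intro k hk
    have hex : ∃ i, k i ≠ 0 := by
      by_contra h
      push_neg at h
      simp [h] at hk
    obtain ⟨i, hi⟩ := hex
    set k' := Function.update k i (k i - 1) with hk'def
    have hki : k' i + 1 = k i := by
      simp only [hk'def, Function.update_self]; omega
    have hkk : Function.update k' i (k' i + 1) = k := by
      funext j
      rcases eq_or_ne j i with rfl | hj
      · simp [Function.update_self, hki]
      · simp [Function.update_of_ne hj, hk'def]
    have hsum' : ∑ j, k' j = m := by
      rw [hk'def, Finset.sum_update_of_mem (Finset.mem_univ i), Finset.sdiff_singleton_eq_erase]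
      rw [← Finset.add_sum_erase _ k (Finset.mem_univ i)] at hk
      omega
    have hmem : (fun x => Hmulti k' (U.mulVec x)) ∈ hermiteSpan d m := ih k' hsum'
    obtain ⟨hdiff, haop⟩ := aop_mem m hmem
    set c := Real.sqrt ((k' i : ℝ) + 1) with hc
    have hcne : c ≠ 0 := by rw [hc]; positivity
    have hAk : Aop i (Hmulti k') = c • Hmulti k := by
      rw [Aop_hmulti, hkk]
    have heq : (fun x => Hmulti k (U.mulVec x))
        = c⁻¹ • ∑ j, U i j • Aop j (fun x => Hmulti k' (U.mulVec x)) := by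
      funext x
      have h1 : Aop i (Hmulti k') (U.mulVec x) = c * Hmulti k (U.mulVec x) := by
        rw [hAk]; simp
      have h2 := Aop_comp hU (differentiable_hmulti k') i x
      rw [h1] at h2
      simp only [Pi.smul_apply, Finset.sum_apply, smul_eq_mul]
      field_simp
      linarith [h2]
    rw [heq]
    exact Submodule.smul_mem _ _ (Submodule.sum_mem _ fun j _ =>
      Submodule.smul_mem _ _ (haop j))

lemma comp_mem {U : Matrix (Fin d) (Fin d) ℝ} (hU : U ∈ Matrix.orthogonalGroup (Fin d) ℝ)
    (m : ℕ) {f : (Fin d → ℝ) → ℝ} (hf : f ∈ hermiteSpan d m) :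
    (fun x => f (U.mulVec x)) ∈ hermiteSpan d m := by
  refine Submodule.span_induction ?_ ?_ ?_ ?_ hf
  · rintro g ⟨k, hk, rfl⟩
    exact key hU m k hk
  · have : (fun x : Fin d → ℝ => (0 : (Fin d → ℝ) → ℝ) (U.mulVec x)) = 0 := rfl
    rw [this]; exact Submodule.zero_mem _
  · intro f g _ _ hf' hg'
    have : (fun x => (f + g) (U.mulVec x))
        = (fun x => f (U.mulVec x)) + (fun x => g (U.mulVec x)) := rfl
    rw [this]; exact Submodule.add_mem _ hf' hg'
  · intro a f _ hf'
    have : (fun x => (a • f) (U.mulVec x)) = a • (fun x => f (U.mulVec x)) := rfl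
    rw [this]; exact Submodule.smul_mem _ _ hf'

lemma orth_facts {U : Matrix (Fin d) (Fin d) ℝ} (hU : U ∈ Matrix.orthogonalGroup (Fin d) ℝ) :
    U * Uᵀ = 1 ∧ Uᵀ * U = 1 := by
  constructor
  · have := (Matrix.mem_orthogonalGroup_iff (Fin d) ℝ).mp hU
    exact this
  · have := (Matrix.mem_orthogonalGroup_iff' (Fin d) ℝ).mp hU
    exact this

lemma mulVec_sq_sum {U : Matrix (Fin d) (Fin d) ℝ} (hU : U ∈ Matrix.orthogonalGroup (Fin d) ℝ)
    (x : Fin d → ℝ) : ∑ i, (U.mulVec x i) ^ 2 = ∑ i, (x i) ^ 2 := by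
  obtain ⟨h1, h2⟩ := orth_facts hU
  have hdot : ∀ v : Fin d → ℝ, ∑ i, (v i) ^ 2 = v ⬝ᵥ v := by
    intro v; simp [dotProduct, sq]
  rw [hdot, hdot]
  rw [Matrix.dotProduct_mulVec]
  congr 1
  rw [← Matrix.mulVec_transpose, Matrix.mulVec_mulVec, h2, Matrix.one_mulVec]

lemma mp_mulVec {U : Matrix (Fin d) (Fin d) ℝ} (hU : U ∈ Matrix.orthogonalGroup (Fin d) ℝ) :
    MeasurePreserving (fun x : Fin d → ℝ => U.mulVec x) volume volume := by
  obtain ⟨h1, h2⟩ := orth_facts hU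
  have hdet : U.det * U.det = 1 := by
    have := congrArg Matrix.det h1
    rwa [Matrix.det_mul, Matrix.det_transpose, Matrix.det_one] at this
  have hdne : U.det ≠ 0 := by
    intro h; rw [h] at hdet; simp at hdet
  have habs : |U.det| = 1 := by
    rcases mul_self_eq_one_iff.mp hdet with h | h <;> simp [h]
  have hco : (fun x : Fin d → ℝ => U.mulVec x) = ⇑(Matrix.toLin' U) := by
    funext v; rw [Matrix.toLin'_apply]
  constructor
  · rw [hco]
    exact (LinearMap.continuous_on_pi _).measurable
  · rw [hco, Real.map_matrix_volume_pi_eq_smul_volume_pi hdne]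
    simp [abs_inv, habs]

lemma memb_mulVec {U : Matrix (Fin d) (Fin d) ℝ} (hU : U ∈ Matrix.orthogonalGroup (Fin d) ℝ) :
    MeasurableEmbedding (fun x : Fin d → ℝ => U.mulVec x) := by
  obtain ⟨h1, h2⟩ := orth_facts hU
  have hinv : Invertible U := ⟨Uᵀ, h2, h1⟩
  have hE : (fun x : Fin d → ℝ => U.mulVec x)
      = ⇑(((Matrix.toLinearEquiv' U hinv).toContinuousLinearEquiv.toHomeomorph).toMeasurableEquiv) := by
    funext v
    rw [Homeomorph.toMeasurableEquiv_coe]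
    show U.mulVec v = (Matrix.toLinearEquiv' U hinv).toContinuousLinearEquiv v
    have : ((Matrix.toLinearEquiv' U hinv).toContinuousLinearEquiv : (Fin d → ℝ) → (Fin d → ℝ))
        = ⇑(Matrix.toLinearEquiv' U hinv) := LinearEquiv.coe_toContinuousLinearEquiv' _
    rw [this]
    rfl
  rw [hE]
  exact MeasurableEquiv.measurableEmbedding _

/-- for an orthogonal transform `U` of `ℝ^d` and any `m`, each
`x ↦ H_𝐤(Ux)` with `|𝐤| = m` lies in `H^{(m)}`; consequently `f ↦ f ∘ U` restricts to a
linear bijection of `H^{(m)}` onto itself preserving the `L²(ℝ^d, φ_d dx)` inner product. -/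
theorem stmt19 {d : ℕ} (U : Matrix (Fin d) (Fin d) ℝ)
    (hU : U ∈ Matrix.orthogonalGroup (Fin d) ℝ) (m : ℕ) :
    -- each transformed Hermite polynomial of degree m stays in H^{(m)}
    (∀ k : Fin d → ℕ, (∑ j, k j) = m →
      (fun x => Hmulti k (U.mulVec x)) ∈ hermiteSpan d m) ∧
    -- `f ↦ f ∘ U` maps H^{(m)} into itself ...
    (∀ f : (Fin d → ℝ) → ℝ, f ∈ hermiteSpan d m →
      (fun x => f (U.mulVec x)) ∈ hermiteSpan d m) ∧
    -- ... injectively,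
    (∀ f g : (Fin d → ℝ) → ℝ, f ∈ hermiteSpan d m → g ∈ hermiteSpan d m →
      (fun x => f (U.mulVec x)) = (fun x => g (U.mulVec x)) → f = g) ∧
    -- ... surjectively,
    (∀ f : (Fin d → ℝ) → ℝ, f ∈ hermiteSpan d m →
      ∃ g ∈ hermiteSpan d m, (fun x => g (U.mulVec x)) = f) ∧
    -- ... preserving the Gaussian L² inner product.
    (∀ f g : (Fin d → ℝ) → ℝ, f ∈ hermiteSpan d m → g ∈ hermiteSpan d m →
      ∫ x, f (U.mulVec x) * g (U.mulVec x) * gaussD d x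
        = ∫ x, f x * g x * gaussD d x) := by
  obtain ⟨h1, h2⟩ := orth_facts hU
  refine ⟨fun k hk => key hU m k hk, fun f hf => comp_mem hU m hf, ?_, ?_, ?_⟩
  · intro f g _ _ h
    funext y
    have := congrFun h (Uᵀ.mulVec y)
    simpa [Matrix.mulVec_mulVec, h1, Matrix.one_mulVec] using this
  · intro f hf
    have hUt : Uᵀ ∈ Matrix.orthogonalGroup (Fin d) ℝ := by
      rw [Matrix.mem_orthogonalGroup_iff, Matrix.transpose_transpose]
      exact h2
    refine ⟨fun x => f (Uᵀ.mulVec x), comp_mem hUt m hf, ?_⟩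
    funext x
    simp [Matrix.mulVec_mulVec, h2, Matrix.one_mulVec]
  · intro f g _ _
    have hginv : ∀ x : Fin d → ℝ, gaussD d (U.mulVec x) = gaussD d x := by
      intro x; simp [gaussD, mulVec_sq_sum hU]
    have h := (mp_mulVec hU).integral_comp (memb_mulVec hU)
      (fun y => f y * g y * gaussD d y)
    simp only [hginv] at h
    exact h


end
end
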